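/- arXiv:1609.00763 — 4 statements merged into one kernel-verified Lean document; each statement's English description precedes it below -/
import Mathlib

section
/- Let G be a 2-connected n-vertex multigraph that contains a vertex adjacent to all other vertices. Then either G is isomorphic to K_n^k for some k ≥ 1 (i.e., every two distinct vertices of G are joined by exactly k edges), or G is DP-degree-colorable. -/
open scoped Classical

/-- A multigraph on vertex type `V`: a symmetric edge-multiplicity function with no loops. -/
structure Multigraph (V : Type) where
  e : V → V → ℕ
  symm : ∀ u v, e u v = e v u
  loopless : ∀ v, e v v = 0

namespace Multigraph

variable {V : Type}

/-- `u` and `v` are adjacent if they are distinct and joined by at least one edge. -/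
def Adj (G : Multigraph V) (u v : V) : Prop := u ≠ v ∧ 1 ≤ G.e u v

/-- The underlying simple graph of a multigraph. -/
def toSimpleGraph (G : Multigraph V) : SimpleGraph V where
  Adj := G.Adj
  symm := ⟨fun u v h => ⟨Ne.symm h.1, by rw [G.symm]; exact h.2⟩⟩
  loopless := ⟨fun v h => h.1 rfl⟩

/-- The degree of a vertex: the sum of edge multiplicities at it. -/
def deg [Fintype V] (G : Multigraph V) (v : V) : ℕ := ∑ u, G.e v u

/-- The induced sub-multigraph on a set of vertices. -/
def induce (G : Multigraph V) (B : Set V) : Multigraph B where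
  e u v := G.e u v
  symm u v := G.symm u v
  loopless v := G.loopless v

/-- A cover `(L, H)` of a multigraph `G`: pairwise disjoint lists `L v` of colors and a
graph `H` on the union of the lists (given by its adjacency relation `HAdj`), such that each
`L v` spans a clique, every edge of `H` joins colors of a single list or colors of lists of
adjacent vertices, and each color of `L u` has at most `e_G(u,v)` neighbors in `L v`. -/
structure Cover (G : Multigraph V) (C : Type) where
  L : V → Finset C
  HAdj : C → C → Prop
  Hsymm : ∀ x y, HAdj x y → HAdj y x
  Hirrefl : ∀ x, ¬ HAdj x x
  disjoint : ∀ u v, u ≠ v → Disjoint (L u) (L v)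
  cliques : ∀ v, ∀ x ∈ L v, ∀ y ∈ L v, x ≠ y → HAdj x y
  edges_within : ∀ x y, HAdj x y → ∃ u v, x ∈ L u ∧ y ∈ L v ∧ (u = v ∨ G.Adj u v)
  matching : ∀ u v, u ≠ v → ∀ x ∈ L u, ((L v).filter fun y => HAdj x y).card ≤ G.e u v

/-- An `(L,H)`-coloring: an independent set of `H` meeting every list in exactly one color. -/
def Cover.IsColoring {G : Multigraph V} {C : Type} (cov : Cover G C) (I : Finset C) : Prop :=
  (∀ x ∈ I, ∃ v, x ∈ cov.L v) ∧
  (∀ x ∈ I, ∀ y ∈ I, ¬ cov.HAdj x y) ∧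
  (∀ v, (I ∩ cov.L v).card = 1)

/-- `G` is `(L,H)`-colorable if an `(L,H)`-coloring exists. -/
def Cover.Colorable {G : Multigraph V} {C : Type} (cov : Cover G C) : Prop :=
  ∃ I, cov.IsColoring I

/-- `G` is DP-degree-colorable if it is `(L,H)`-colorable whenever `|L v| ≥ deg v` for all `v`. -/
def DPDegreeColorable [Fintype V] (G : Multigraph V) : Prop :=
  ∀ (C : Type) (cov : Cover G C), (∀ v, G.deg v ≤ (cov.L v).card) → cov.Colorable

/-- The DP-chromatic number: the least `k` such that `G` is `(L,H)`-colorable for every cover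
with all lists of size at least `k`. -/
noncomputable def DPChromatic [Fintype V] (G : Multigraph V) : ℕ :=
  sInf {k | ∀ (C : Type) (cov : Cover G C), (∀ v, k ≤ (cov.L v).card) → cov.Colorable}

/-- The sub-multigraph of `G` on vertex set `A` with multiplicities `e' ≤ e_G`. -/
def subMG (G : Multigraph V) (A : Finset V) (e' : V → V → ℕ)
    (hsymm : ∀ u v, e' u v = e' v u) (hle : ∀ u v, e' u v ≤ G.e u v) :
    Multigraph {x // x ∈ A} where
  e u v := e' u v
  symm u v := hsymm u v
  loopless v := Nat.le_zero.mp (le_of_le_of_eq (hle v v) (G.loopless v))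

/-- `G` is DP-`k`-critical: `χ_DP(G) = k` and every proper sub-multigraph (obtained by deleting
vertices and/or decreasing edge multiplicities) has smaller DP-chromatic number. -/
def DPCritical [Fintype V] (G : Multigraph V) (k : ℕ) : Prop :=
  DPChromatic G = k ∧
  ∀ (A : Finset V) (e' : V → V → ℕ) (hsymm : ∀ u v, e' u v = e' v u)
    (hle : ∀ u v, e' u v ≤ G.e u v),
    (∀ u v, e' u v ≠ 0 → u ∈ A ∧ v ∈ A) →
    ¬(A = Finset.univ ∧ e' = G.e) →
    DPChromatic (subMG G A e' hsymm hle) < k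

/-- `G[B]` is connected and has no cut vertex. -/
def Nonseparable (G : Multigraph V) (B : Set V) : Prop :=
  B.Nonempty ∧ (G.induce B).toSimpleGraph.Connected ∧
    ∀ v ∈ B, (G.induce (B \ {v})).toSimpleGraph.Preconnected

/-- A block of `G`: a maximal vertex set inducing a connected sub-multigraph with no cut vertex. -/
def IsBlock (G : Multigraph V) (B : Set V) : Prop :=
  Nonseparable G B ∧ ∀ B', B ⊆ B' → Nonseparable G B' → B' = B

/-- `G` is 2-connected: connected, at least two vertices, and deleting any one vertex leaves
it connected. -/
def TwoConnected [Fintype V] (G : Multigraph V) : Prop :=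
  G.toSimpleGraph.Connected ∧ 2 ≤ Fintype.card V ∧
    ∀ v : V, (G.induce ({v}ᶜ : Set V)).toSimpleGraph.Connected

end Multigraph

/-- A simple graph is a cycle iff it is connected and every vertex has exactly two neighbors. -/
def IsCycleGraph {α : Type} (S : SimpleGraph α) : Prop :=
  S.Connected ∧ ∀ v, {u | S.Adj v u}.ncard = 2

/-- The multigraph `K_n^k`: `n` vertices, every two distinct vertices joined by `k` edges. -/
def KMG (n k : ℕ) : Multigraph (Fin n) where
  e u v := if u = v then 0 else k
  symm u v := by by_cases h : u = v <;> simp [h, eq_comm]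
  loopless v := by simp

/-- The multigraph `C_n^k`: the `n`-cycle with every edge of multiplicity `k`. -/
def CMG (n k : ℕ) : Multigraph (Fin n) where
  e u v := if u ≠ v ∧ ((u.val + 1) % n = v.val ∨ (v.val + 1) % n = u.val) then k else 0
  symm u v := by
    apply if_congr _ rfl rfl
    constructor
    · rintro ⟨h1, h2⟩; exact ⟨h1.symm, h2.symm⟩
    · rintro ⟨h1, h2⟩; exact ⟨h1.symm, h2.symm⟩
  loopless v := by simp

set_option linter.unusedSectionVars false
set_option linter.unusedVariables false
section DPHelper

open Multigraph Finset

variable {V : Type} [Fintype V] {C : Type} {G : Multigraph V}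

/-- The set of colors in `L v` blocked by the partial coloring `I`. -/
noncomputable def blk (cov : Cover G C) (I : Finset C) (v : V) : Finset C :=
  (cov.L v).filter (fun y => ∃ x ∈ I, cov.HAdj x y)

/-- A partial coloring of the vertices of `S`. -/
def PC (cov : Cover G C) (S : Finset V) (I : Finset C) : Prop :=
  (∀ x ∈ I, ∃ v ∈ S, x ∈ cov.L v) ∧ (∀ x ∈ I, ∀ y ∈ I, ¬ cov.HAdj x y) ∧
    (∀ v ∈ S, (I ∩ cov.L v).card = 1)

lemma mem_blk (cov : Cover G C) {I : Finset C} {v : V} {y : C} :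
    y ∈ blk cov I v ↔ y ∈ cov.L v ∧ ∃ x ∈ I, cov.HAdj x y := by
  simp [blk]

lemma blk_subset (cov : Cover G C) (I : Finset C) (v : V) : blk cov I v ⊆ cov.L v :=
  Finset.filter_subset _ _

lemma adj_symm (G : Multigraph V) {u v : V} (h : G.Adj u v) : G.Adj v u :=
  ⟨h.1.symm, by rw [G.symm]; exact h.2⟩

lemma deg_eq (G : Multigraph V) (z : V) : G.deg z = ∑ u ∈ Finset.univ.erase z, G.e u z := by
  rw [deg, ← Finset.sum_erase Finset.univ (f := fun u => G.e z u) (G.loopless z)]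
  exact Finset.sum_congr rfl fun u _ => G.symm z u

lemma deg_pos_of_adj {u v : V} (h : G.Adj u v) : 1 ≤ G.deg u :=
  le_trans h.2 (Finset.single_le_sum (fun i _ => Nat.zero_le _) (Finset.mem_univ v))

lemma L_nonempty (cov : Cover G C) (hsize : ∀ v, G.deg v ≤ (cov.L v).card) {u v : V}
    (h : G.Adj u v) : (cov.L u).Nonempty := by
  have h1 := deg_pos_of_adj h
  have h2 := hsize u
  exact Finset.card_pos.mp (by omega)

lemma extend (cov : Cover G C) {S : Finset V} {I : Finset C} {v : V} {y : C}
    (hPC : PC cov S I) (hvS : v ∉ S) (hy : y ∈ cov.L v) (hyb : y ∉ blk cov I v) :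
    PC cov (insert v S) (insert y I) := by
  obtain ⟨h1, h2, h3⟩ := hPC
  have hynadj : ∀ x ∈ I, ¬ cov.HAdj x y := by
    intro x hx hadj
    exact hyb ((mem_blk cov).mpr ⟨hy, x, hx, hadj⟩)
  have hnotLv : ∀ x ∈ I, x ∉ cov.L v := by
    intro x hx hxv
    obtain ⟨u, hu, hxu⟩ := h1 x hx
    exact Finset.disjoint_left.mp (cov.disjoint u v (ne_of_mem_of_not_mem hu hvS)) hxu hxv
  refine ⟨?_, ?_, ?_⟩
  · intro x hx
    rcases Finset.mem_insert.mp hx with rfl | hx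
    · exact ⟨v, Finset.mem_insert_self _ _, hy⟩
    · obtain ⟨u, hu, hxu⟩ := h1 x hx
      exact ⟨u, Finset.mem_insert_of_mem hu, hxu⟩
  · intro a ha b hb hab
    rcases Finset.mem_insert.mp ha with ha' | ha' <;>
      rcases Finset.mem_insert.mp hb with hb' | hb'
    · exact cov.Hirrefl y (by rw [ha', hb'] at hab; exact hab)
    · exact hynadj b hb' (cov.Hsymm _ _ (by rw [ha'] at hab; exact hab))
    · exact hynadj a ha' (by rw [hb'] at hab; exact hab)
    · exact h2 a ha' b hb' hab
  · intro u hu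
    rcases Finset.mem_insert.mp hu with rfl | hu
    · have : insert y I ∩ cov.L u = {y} := by
        ext c
        simp only [Finset.mem_inter, Finset.mem_insert, Finset.mem_singleton]
        constructor
        · rintro ⟨rfl | hc, hcL⟩
          · rfl
          · exact absurd hcL (hnotLv c hc)
        · rintro rfl
          exact ⟨Or.inl rfl, hy⟩
      rw [this, Finset.card_singleton]
    · have hyLu : y ∉ cov.L u := by
        intro hyu
        exact Finset.disjoint_left.mp (cov.disjoint v u (ne_of_mem_of_not_mem hu hvS).symm) hy hyu
      have : insert y I ∩ cov.L u = I ∩ cov.L u := by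
        ext c
        simp only [Finset.mem_inter, Finset.mem_insert]
        constructor
        · rintro ⟨rfl | hc, hcL⟩
          · exact absurd hcL hyLu
          · exact ⟨hc, hcL⟩
        · rintro ⟨hc, hcL⟩
          exact ⟨Or.inr hc, hcL⟩
      rw [this]
      exact h3 u hu

lemma blk_card_le (cov : Cover G C) {S : Finset V} {I : Finset C} (hPC : PC cov S I) {z : V}
    (hz : z ∉ S) : (blk cov I z).card ≤ ∑ u ∈ S, G.e u z := by
  obtain ⟨h1, _, h3⟩ := hPC
  have hsub : blk cov I z ⊆
      S.biUnion (fun u => (cov.L z).filter (fun y => ∃ x ∈ I ∩ cov.L u, cov.HAdj x y)) := by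
    intro y hy
    obtain ⟨hyL, x, hxI, hadj⟩ := (mem_blk cov).mp hy
    obtain ⟨u, hu, hxu⟩ := h1 x hxI
    exact Finset.mem_biUnion.mpr ⟨u, hu,
      Finset.mem_filter.mpr ⟨hyL, x, Finset.mem_inter.mpr ⟨hxI, hxu⟩, hadj⟩⟩
  refine le_trans (Finset.card_le_card hsub) (le_trans (Finset.card_biUnion_le) ?_)
  refine Finset.sum_le_sum ?_
  intro u hu
  obtain ⟨xu, hxu⟩ := Finset.card_eq_one.mp (h3 u hu)
  have hxuL : xu ∈ cov.L u := (Finset.mem_inter.mp (hxu ▸ Finset.mem_singleton_self xu)).2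
  have hsub2 : (cov.L z).filter (fun y => ∃ x ∈ I ∩ cov.L u, cov.HAdj x y) ⊆
      (cov.L z).filter (fun y => cov.HAdj xu y) := by
    intro y hy
    obtain ⟨hyL, x, hxmem, hadj⟩ := Finset.mem_filter.mp hy
    have : x = xu := Finset.mem_singleton.mp (hxu ▸ hxmem)
    exact Finset.mem_filter.mpr ⟨hyL, this ▸ hadj⟩
  exact le_trans (Finset.card_le_card hsub2)
    (cov.matching u z (ne_of_mem_of_not_mem hu hz) xu hxuL)

lemma PC_erase (cov : Cover G C) {S : Finset V} {I : Finset C} {u : V} {x : C}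
    (hPC : PC cov S I) (hu : u ∈ S) (hxI : x ∈ I) (hxL : x ∈ cov.L u) :
    PC cov (S.erase u) (I.erase x) := by
  obtain ⟨h1, h2, h3⟩ := hPC
  have key : ∀ x' ∈ I, x' ∈ cov.L u → x' = x := by
    intro x' hx' hx'L
    obtain ⟨a, ha⟩ := Finset.card_eq_one.mp (h3 u hu)
    have e1 : x' ∈ ({a} : Finset C) := ha ▸ (Finset.mem_inter.mpr ⟨hx', hx'L⟩)
    have e2 : x ∈ ({a} : Finset C) := ha ▸ (Finset.mem_inter.mpr ⟨hxI, hxL⟩)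
    rw [Finset.mem_singleton.mp e1, Finset.mem_singleton.mp e2]
  refine ⟨?_, ?_, ?_⟩
  · intro x' hx'
    obtain ⟨v, hv, hx'v⟩ := h1 x' (Finset.mem_of_mem_erase hx')
    refine ⟨v, Finset.mem_erase.mpr ⟨?_, hv⟩, hx'v⟩
    rintro rfl
    exact (Finset.mem_erase.mp hx').1 (key x' (Finset.mem_of_mem_erase hx') hx'v)
  · intro a ha b hb
    exact h2 a (Finset.mem_of_mem_erase ha) b (Finset.mem_of_mem_erase hb)
  · intro v hv
    have hvu : v ≠ u := (Finset.mem_erase.mp hv).1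
    have : I.erase x ∩ cov.L v = I ∩ cov.L v := by
      ext c
      simp only [Finset.mem_inter, Finset.mem_erase]
      constructor
      · rintro ⟨⟨_, hc⟩, hcL⟩
        exact ⟨hc, hcL⟩
      · rintro ⟨hc, hcL⟩
        refine ⟨⟨?_, hc⟩, hcL⟩
        rintro rfl
        exact Finset.disjoint_left.mp (cov.disjoint u v hvu.symm) hxL hcL
    rw [this]
    exact h3 v (Finset.mem_of_mem_erase hv)

lemma fill (cov : Cover G C) (hsize : ∀ v, G.deg v ≤ (cov.L v).card) (z : V) (r : V → ℕ) :
    ∀ T : Finset V, ∀ S : Finset V, ∀ I : Finset C,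
      PC cov S I → (∀ v ∈ T, v ∉ S) → z ∉ T → z ∉ S →
      (∀ v ∈ T, ∃ u, G.Adj v u ∧ (u = z ∨ (u ∈ T ∧ r u < r v))) →
      ∃ I', I ⊆ I' ∧ PC cov (S ∪ T) I' := by
  intro T
  induction T using Finset.strongInduction with
  | _ T ih =>
  intro S I hPC hTS hzT hzS hH
  rcases T.eq_empty_or_nonempty with rfl | hTne
  · exact ⟨I, Finset.Subset.refl I, by simpa using hPC⟩
  obtain ⟨v, hvT, hvmax⟩ := Finset.exists_max_image T r hTne
  obtain ⟨u0, hadj, hu0⟩ := hH v hvT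
  have hvS : v ∉ S := hTS v hvT
  have hu0v : u0 ≠ v := by
    rcases hu0 with rfl | ⟨_, hlt⟩
    · exact fun h => hzT (h ▸ hvT)
    · exact fun h => lt_irrefl _ (h ▸ hlt)
  have hu0S : u0 ∉ S := by
    rcases hu0 with rfl | ⟨hu0T, _⟩
    · exact hzS
    · exact hTS u0 hu0T
  have hb : (blk cov I v).card < (cov.L v).card := by
    have h1 : (blk cov I v).card ≤ ∑ u ∈ S, G.e u v := blk_card_le cov hPC hvS
    have h2 : S ⊆ (Finset.univ.erase v).erase u0 := by
      intro u hu
      exact Finset.mem_erase.mpr ⟨fun h => hu0S (h ▸ hu),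
        Finset.mem_erase.mpr ⟨fun h => hvS (h ▸ hu), Finset.mem_univ u⟩⟩
    have h3 : ∑ u ∈ S, G.e u v ≤ ∑ u ∈ (Finset.univ.erase v).erase u0, G.e u v :=
      Finset.sum_le_sum_of_subset h2
    have h4 : ∑ u ∈ (Finset.univ.erase v).erase u0, G.e u v + G.e u0 v
        = ∑ u ∈ Finset.univ.erase v, G.e u v :=
      Finset.sum_erase_add _ _ (Finset.mem_erase.mpr ⟨hu0v, Finset.mem_univ u0⟩)
    have h5 : 1 ≤ G.e u0 v := by rw [← G.symm]; exact hadj.2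
    have h6 : ∑ u ∈ Finset.univ.erase v, G.e u v = G.deg v := (deg_eq G v).symm
    have h7 := hsize v
    omega
  obtain ⟨y, hy⟩ : ((cov.L v) \ blk cov I v).Nonempty := by
    apply Finset.card_pos.mp
    have hsubblk : blk cov I v ⊆ cov.L v := Finset.filter_subset _ _
    rw [Finset.card_sdiff_of_subset hsubblk]
    omega
  have hyL : y ∈ cov.L v := (Finset.mem_sdiff.mp hy).1
  have hyb : y ∉ blk cov I v := (Finset.mem_sdiff.mp hy).2
  have hPC' := extend cov hPC hvS hyL hyb
  have hTS' : ∀ v' ∈ T.erase v, v' ∉ insert v S := by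
    intro v' hv'
    simp only [Finset.mem_insert, not_or]
    exact ⟨(Finset.mem_erase.mp hv').1, hTS v' (Finset.mem_of_mem_erase hv')⟩
  have hzT' : z ∉ T.erase v := fun h => hzT (Finset.mem_of_mem_erase h)
  have hzS' : z ∉ insert v S := by
    simp only [Finset.mem_insert, not_or]
    exact ⟨fun h => hzT (h ▸ hvT), hzS⟩
  have hH' : ∀ v' ∈ T.erase v, ∃ u, G.Adj v' u ∧ (u = z ∨ (u ∈ T.erase v ∧ r u < r v')) := by
    intro v' hv'
    obtain ⟨u, hu1, hu2⟩ := hH v' (Finset.mem_of_mem_erase hv')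
    refine ⟨u, hu1, ?_⟩
    rcases hu2 with rfl | ⟨huT, hlt⟩
    · exact Or.inl rfl
    · refine Or.inr ⟨Finset.mem_erase.mpr ⟨?_, huT⟩, hlt⟩
      rintro rfl
      exact absurd (hvmax v' (Finset.mem_of_mem_erase hv')) (not_le.mpr hlt)
  obtain ⟨I', hII', hPC''⟩ := ih (T.erase v) (Finset.erase_ssubset hvT) (insert v S)
    (insert y I) hPC' hTS' hzT' hzS' hH'
  refine ⟨I', le_trans (Finset.subset_insert y I) hII', ?_⟩
  have hset : insert v S ∪ T.erase v = S ∪ T := by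
    ext a
    simp only [Finset.mem_union, Finset.mem_insert, Finset.mem_erase]
    constructor
    · rintro ((rfl | h) | ⟨_, h⟩)
      · exact Or.inr hvT
      · exact Or.inl h
      · exact Or.inr h
    · rintro (h | h)
      · exact Or.inl (Or.inr h)
      · by_cases hav : a = v
        · exact Or.inl (Or.inl hav)
        · exact Or.inr ⟨hav, h⟩
  rwa [hset] at hPC''

lemma master (cov : Cover G C) (hsize : ∀ v, G.deg v ≤ (cov.L v).card) (z : V)
    (S0 : Finset V) (I0 : Finset C) (hPC0 : PC cov S0 I0) (hzS0 : z ∉ S0) (r : V → ℕ)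
    (hH : ∀ v, v ≠ z → v ∉ S0 → ∃ u, G.Adj v u ∧ (u = z ∨ (u ≠ z ∧ u ∉ S0 ∧ r u < r v)))
    (hlast : ∀ I, I0 ⊆ I → PC cov (Finset.univ.erase z) I →
      (blk cov I z).card < (cov.L z).card) :
    cov.Colorable := by
  set T := (Finset.univ.erase z) \ S0 with hT
  have h1 : ∀ v ∈ T, v ∉ S0 := fun v hv => (Finset.mem_sdiff.mp hv).2
  have h2 : z ∉ T := fun h => (Finset.mem_erase.mp (Finset.mem_sdiff.mp h).1).1 rfl
  have hfillH : ∀ v ∈ T, ∃ u, G.Adj v u ∧ (u = z ∨ (u ∈ T ∧ r u < r v)) := by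
    intro v hv
    have hvz : v ≠ z := (Finset.mem_erase.mp (Finset.mem_sdiff.mp hv).1).1
    obtain ⟨u, hu1, hu2⟩ := hH v hvz (h1 v hv)
    refine ⟨u, hu1, ?_⟩
    rcases hu2 with rfl | ⟨huz, huS0, hlt⟩
    · exact Or.inl rfl
    · exact Or.inr ⟨Finset.mem_sdiff.mpr
        ⟨Finset.mem_erase.mpr ⟨huz, Finset.mem_univ u⟩, huS0⟩, hlt⟩
  obtain ⟨I, hI0I, hPCI⟩ := fill cov hsize z r T S0 I0 hPC0 h1 h2 hzS0 hfillH
  have hS0sub : S0 ⊆ Finset.univ.erase z := fun u hu =>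
    Finset.mem_erase.mpr ⟨fun h => hzS0 (h ▸ hu), Finset.mem_univ u⟩
  have hunion : S0 ∪ T = Finset.univ.erase z := Finset.union_sdiff_of_subset hS0sub
  rw [hunion] at hPCI
  have hroom := hlast I hI0I hPCI
  obtain ⟨y, hy⟩ : ((cov.L z) \ blk cov I z).Nonempty := by
    apply Finset.card_pos.mp
    rw [Finset.card_sdiff_of_subset (blk_subset cov I z)]
    omega
  have hPCfin := extend cov hPCI (Finset.notMem_erase z _) (Finset.mem_sdiff.mp hy).1
    (Finset.mem_sdiff.mp hy).2
  rw [Finset.insert_erase (Finset.mem_univ z)] at hPCfin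
  obtain ⟨p1, p2, p3⟩ := hPCfin
  exact ⟨insert y I, fun x hx => (p1 x hx).imp (fun v hv => hv.2), p2,
    fun v => p3 v (Finset.mem_univ v)⟩

lemma hlast_save (cov : Cover G C) (hsize : ∀ v, G.deg v ≤ (cov.L v).card) {z u1 : V}
    (hu1z : u1 ≠ z) {I : Finset C} (hPC : PC cov (Finset.univ.erase z) I)
    {x1 : C} (hx1I : x1 ∈ I) (hx1L : x1 ∈ cov.L u1)
    {D : Finset C} (hsub : (cov.L z).filter (fun y => cov.HAdj x1 y) ⊆ D ∪ blk cov (I.erase x1) z)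
    (hD : D.card + 1 ≤ G.e u1 z) :
    (blk cov I z).card < (cov.L z).card := by
  have hu1 : u1 ∈ Finset.univ.erase z := Finset.mem_erase.mpr ⟨hu1z, Finset.mem_univ u1⟩
  have hPC' := PC_erase cov hPC hu1 hx1I hx1L
  have hz' : z ∉ (Finset.univ.erase z).erase u1 :=
    fun h => (Finset.mem_erase.mp (Finset.mem_of_mem_erase h)).1 rfl
  have hb1 : (blk cov (I.erase x1) z).card ≤ ∑ u ∈ (Finset.univ.erase z).erase u1, G.e u z :=
    blk_card_le cov hPC' hz'
  have hsub2 : blk cov I z ⊆ blk cov (I.erase x1) z ∪ D := by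
    intro y hy
    obtain ⟨hyL, x, hxI, hadj⟩ := (mem_blk cov).mp hy
    by_cases hxx : x = x1
    · subst hxx
      have hmem : y ∈ (cov.L z).filter (fun y => cov.HAdj x y) := Finset.mem_filter.mpr ⟨hyL, hadj⟩
      rcases Finset.mem_union.mp (hsub hmem) with h | h
      · exact Finset.mem_union.mpr (Or.inr h)
      · exact Finset.mem_union.mpr (Or.inl h)
    · exact Finset.mem_union.mpr (Or.inl ((mem_blk cov).mpr
        ⟨hyL, x, Finset.mem_erase.mpr ⟨hxx, hxI⟩, hadj⟩))
  have hc : (blk cov I z).card ≤ (blk cov (I.erase x1) z).card + D.card :=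
    le_trans (Finset.card_le_card hsub2) (Finset.card_union_le _ _)
  have hsum : ∑ u ∈ (Finset.univ.erase z).erase u1, G.e u z + G.e u1 z
      = ∑ u ∈ Finset.univ.erase z, G.e u z :=
    Finset.sum_erase_add _ _ hu1
  have hdeg : ∑ u ∈ Finset.univ.erase z, G.e u z = G.deg z := (deg_eq G z).symm
  have hsz := hsize z
  omega

lemma PC_single (cov : Cover G C) {u : V} {x : C} (hx : x ∈ cov.L u) :
    PC cov {u} {x} := by
  refine ⟨?_, ?_, ?_⟩
  · intro a ha
    rw [Finset.mem_singleton.mp ha]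
    exact ⟨u, Finset.mem_singleton_self u, hx⟩
  · intro a ha b hb hab
    rw [Finset.mem_singleton.mp ha, Finset.mem_singleton.mp hb] at hab
    exact cov.Hirrefl x hab
  · intro v hv
    rw [Finset.mem_singleton.mp hv, Finset.singleton_inter_of_mem hx, Finset.card_singleton]

lemma PC_pair (cov : Cover G C) {u1 u2 : V} {c1 c2 : C} (hne : u1 ≠ u2)
    (hc1 : c1 ∈ cov.L u1) (hc2 : c2 ∈ cov.L u2) (hna : ¬ cov.HAdj c1 c2) :
    PC cov {u1, u2} {c1, c2} := by
  have hdisj := cov.disjoint u1 u2 hne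
  have h21 : c2 ∉ cov.L u1 := fun h => Finset.disjoint_left.mp hdisj h hc2
  have h12 : c1 ∉ cov.L u2 := fun h => Finset.disjoint_right.mp hdisj h hc1
  refine ⟨?_, ?_, ?_⟩
  · intro a ha
    rcases Finset.mem_insert.mp ha with rfl | ha
    · exact ⟨u1, Finset.mem_insert_self _ _, hc1⟩
    · rw [Finset.mem_singleton.mp ha]
      exact ⟨u2, Finset.mem_insert_of_mem (Finset.mem_singleton_self u2), hc2⟩
  · intro a ha b hb hab
    have ha' : a = c1 ∨ a = c2 := by simpa using ha
    have hb' : b = c1 ∨ b = c2 := by simpa using hb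
    rcases ha' with ha' | ha' <;> rcases hb' with hb' | hb'
    · exact cov.Hirrefl c1 (by rw [ha', hb'] at hab; exact hab)
    · exact hna (by rw [ha', hb'] at hab; exact hab)
    · exact hna (cov.Hsymm _ _ (by rw [ha', hb'] at hab; exact hab))
    · exact cov.Hirrefl c2 (by rw [ha', hb'] at hab; exact hab)
  · intro v hv
    rcases Finset.mem_insert.mp hv with rfl | hv
    · have : ({c1, c2} : Finset C) ∩ cov.L v = {c1} := by
        ext a
        simp only [Finset.mem_inter, Finset.mem_insert, Finset.mem_singleton]
        constructor
        · rintro ⟨rfl | rfl, hL⟩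
          · rfl
          · exact absurd hL h21
        · rintro rfl
          exact ⟨Or.inl rfl, hc1⟩
      rw [this, Finset.card_singleton]
    · rw [Finset.mem_singleton.mp hv]
      have : ({c1, c2} : Finset C) ∩ cov.L u2 = {c2} := by
        ext a
        simp only [Finset.mem_inter, Finset.mem_insert, Finset.mem_singleton]
        constructor
        · rintro ⟨rfl | rfl, hL⟩
          · exact absurd hL h12
          · rfl
        · rintro rfl
          exact ⟨Or.inr rfl, hc2⟩
      rw [this, Finset.card_singleton]

lemma exists_adj_dist_lt {α : Type} {S : SimpleGraph α} (hconn : S.Connected) {a z : α}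
    (hne : a ≠ z) : ∃ b, S.Adj a b ∧ S.dist b z < S.dist a z := by
  have hd : 0 < S.dist a z := hconn.pos_dist_of_ne hne
  obtain ⟨p, hp⟩ := (hconn.preconnected a z).exists_walk_length_eq_dist
  have hnil : ¬ p.Nil := by
    rw [SimpleGraph.Walk.not_nil_iff_lt_length]
    omega
  refine ⟨p.snd, p.adj_snd hnil, ?_⟩
  have h1 := SimpleGraph.Walk.length_tail_add_one hnil
  have h2 := SimpleGraph.dist_le p.tail
  omega

lemma find_overlap (cov : Cover G C)
    (hfull : ∀ u v : V, G.Adj u v → ∀ x ∈ cov.L u,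
      ((cov.L v).filter fun y => cov.HAdj x y).card = G.e u v)
    {p q r0 : V} (hpq : G.Adj p q) (hpr : G.Adj p r0) (hqr : G.Adj q r0)
    (hlt : G.e p q < G.e p r0) {ca : C} (hca : ca ∈ cov.L p) :
    ∃ x ∈ cov.L r0, ∃ cb ∈ cov.L q, cov.HAdj ca x ∧ cov.HAdj cb x ∧ ¬ cov.HAdj ca cb := by
  by_contra hcon
  push_neg at hcon
  set Xs := (cov.L r0).filter (fun y => cov.HAdj ca y) with hXs
  set Zs := (cov.L q).filter (fun y => cov.HAdj ca y) with hZs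
  have hXcard : Xs.card = G.e p r0 := hfull p r0 hpr ca hca
  have hZcard : Zs.card = G.e p q := hfull p q hpq ca hca
  have key : ∀ x ∈ Xs, ((cov.L q).filter fun y => cov.HAdj x y)
      = Zs.filter (fun y => cov.HAdj x y) := by
    intro x hx
    have hxr : x ∈ cov.L r0 := (Finset.mem_filter.mp hx).1
    have hcax : cov.HAdj ca x := (Finset.mem_filter.mp hx).2
    ext y
    simp only [Finset.mem_filter, hZs]
    constructor
    · rintro ⟨hyL, hadj⟩
      exact ⟨⟨hyL, hcon x hxr y hyL hcax (cov.Hsymm _ _ hadj)⟩, hadj⟩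
    · rintro ⟨⟨hyL, _⟩, hadj⟩
      exact ⟨hyL, hadj⟩
  have hsum1 : ∑ x ∈ Xs, ((cov.L q).filter fun y => cov.HAdj x y).card
      = G.e p r0 * G.e r0 q := by
    rw [Finset.sum_congr rfl (fun x hx => hfull r0 q (adj_symm G hqr) x (Finset.mem_filter.mp hx).1),
      Finset.sum_const, smul_eq_mul, hXcard]
  have hsum2 : ∑ x ∈ Xs, (Zs.filter fun y => cov.HAdj x y).card
      = ∑ y ∈ Zs, (Xs.filter fun x => cov.HAdj x y).card := by
    simp_rw [Finset.card_filter]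
    exact Finset.sum_comm
  have hsum3 : ∀ y ∈ Zs, (Xs.filter fun x => cov.HAdj x y).card ≤ G.e q r0 := by
    intro y hy
    have hyq : y ∈ cov.L q := (Finset.mem_filter.mp hy).1
    have hsubf : (Xs.filter fun x => cov.HAdj x y) ⊆
        (cov.L r0).filter fun x => cov.HAdj y x := by
      intro x hx
      obtain ⟨hx1, hx2⟩ := Finset.mem_filter.mp hx
      exact Finset.mem_filter.mpr ⟨(Finset.mem_filter.mp hx1).1, cov.Hsymm _ _ hx2⟩
    exact le_trans (Finset.card_le_card hsubf) (cov.matching q r0 hqr.1 y hyq)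
  have hmain : G.e p r0 * G.e r0 q ≤ G.e p q * G.e q r0 := by
    calc G.e p r0 * G.e r0 q
        = ∑ x ∈ Xs, ((cov.L q).filter fun y => cov.HAdj x y).card := hsum1.symm
      _ = ∑ x ∈ Xs, (Zs.filter fun y => cov.HAdj x y).card :=
          Finset.sum_congr rfl (fun x hx => by rw [key x hx])
      _ = ∑ y ∈ Zs, (Xs.filter fun x => cov.HAdj x y).card := hsum2
      _ ≤ ∑ y ∈ Zs, G.e q r0 := Finset.sum_le_sum hsum3
      _ = G.e p q * G.e q r0 := by rw [Finset.sum_const, smul_eq_mul, hZcard]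
  rw [G.symm r0 q] at hmain
  have hq1 : 1 ≤ G.e q r0 := hqr.2
  have : G.e p r0 ≤ G.e p q := Nat.le_of_mul_le_mul_right hmain (by omega)
  omega

end DPHelper
open Multigraph in
/-- **Lemma (dominating vertex).** Let `G` be a 2-connected `n`-vertex multigraph containing a
vertex adjacent to all other vertices. Then either `G ≅ K_n^k` for some `k ≥ 1`, or `G` is
DP-degree-colorable. -/
theorem statement8 {V : Type} [Fintype V] (G : Multigraph V) (h2c : TwoConnected G)
    (w : V) (hw : ∀ v : V, v ≠ w → G.Adj w v) :
    (∃ k ≥ 1, ∀ u v : V, u ≠ v → G.e u v = k) ∨ DPDegreeColorable G := by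
  by_cases hK : ∃ k ≥ 1, ∀ u v : V, u ≠ v → G.e u v = k
  · exact Or.inl hK
  right
  intro C cov hsize
  by_cases hfull : ∀ u v : V, G.Adj u v → ∀ x ∈ cov.L u,
      ((cov.L v).filter fun y => cov.HAdj x y).card = G.e u v
  · -- the cover is "full"
    by_cases hcomp : ∀ u v : V, u ≠ v → G.Adj u v
    · -- underlying graph complete
      by_cases htr : ∃ p q r0 : V, p ≠ q ∧ p ≠ r0 ∧ q ≠ r0 ∧ G.e p q < G.e p r0
      · obtain ⟨p, q, r0, hpq, hpr, hqr, hlt⟩ := htr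
        have hApq := hcomp p q hpq
        have hApr := hcomp p r0 hpr
        have hAqr := hcomp q r0 hqr
        obtain ⟨ca, hca⟩ := L_nonempty cov hsize hApq
        obtain ⟨xx, hxxL, cb, hcb, hcax, hcbx, hnab⟩ :=
          find_overlap cov hfull hApq hApr hAqr hlt hca
        have hPC0 := PC_pair cov hpq hca hcb hnab
        have hzS0 : r0 ∉ ({p, q} : Finset V) := by
          simp only [Finset.mem_insert, Finset.mem_singleton, not_or]
          exact ⟨Ne.symm hpr, Ne.symm hqr⟩
        refine master cov hsize r0 {p, q} {ca, cb} hPC0 hzS0 (fun _ => 0) ?_ ?_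
        · intro a har haS
          exact ⟨r0, hcomp a r0 har, Or.inl rfl⟩
        · intro I hI hPCI
          refine hlast_save cov hsize hpr hPCI (hI (Finset.mem_insert_self _ _)) hca
            (D := ((cov.L r0).filter fun y => cov.HAdj ca y).erase xx) ?_ ?_
          · intro y hy
            by_cases hyx : y = xx
            · subst hyx
              refine Finset.mem_union.mpr (Or.inr ((mem_blk cov).mpr ⟨hxxL, cb, ?_, hcbx⟩))
              refine Finset.mem_erase.mpr ⟨?_, hI (by simp)⟩
              exact fun h => Finset.disjoint_left.mp (cov.disjoint p q hpq) hca (h ▸ hcb)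
            · exact Finset.mem_union.mpr (Or.inl (Finset.mem_erase.mpr ⟨hyx, hy⟩))
          · have hxxf : xx ∈ (cov.L r0).filter fun y => cov.HAdj ca y :=
              Finset.mem_filter.mpr ⟨hxxL, hcax⟩
            rw [Finset.card_erase_add_one hxxf]
            exact le_of_eq (hfull p r0 hApr ca hca)
      · -- no such triple: G is K_n^k, contradiction
        exfalso
        apply hK
        push_neg at htr
        obtain ⟨v0, hv0⟩ := Fintype.exists_ne_of_one_lt_card (by have := h2c.2.1; omega) w
        have step : ∀ a b b' : V, b ≠ a → b' ≠ a → G.e a b = G.e a b' := by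
          intro a b b' hb hb'
          by_cases h : b = b'
          · rw [h]
          · exact le_antisymm (htr a b' b hb'.symm hb.symm (Ne.symm h))
              (htr a b b' hb.symm hb'.symm h)
        refine ⟨G.e w v0, (hw v0 hv0).2, ?_⟩
        intro u v huv
        by_cases huw : u = w
        · subst huw
          exact step u v v0 (Ne.symm huv) hv0
        · have h1 : G.e u v = G.e u w := step u v w (Ne.symm huv) (Ne.symm huw)
          have h2 : G.e w u = G.e w v0 := step w u v0 huw hv0
          rw [h1, G.symm u w, h2]
    · -- some nonadjacent pair
      push_neg at hcomp
      obtain ⟨u1, u2, hne12, hnadj⟩ := hcomp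
      have hu1w : u1 ≠ w := by rintro rfl; exact hnadj (hw u2 (Ne.symm hne12))
      have hu2w : u2 ≠ w := by rintro rfl; exact hnadj (adj_symm G (hw u1 hne12))
      have hAu1w : G.Adj u1 w := adj_symm G (hw u1 hu1w)
      have hAwu2 : G.Adj w u2 := hw u2 hu2w
      obtain ⟨c1, hc1⟩ := L_nonempty cov hsize hAu1w
      have hX : ((cov.L w).filter fun y => cov.HAdj c1 y).card = G.e u1 w :=
        hfull u1 w hAu1w c1 hc1
      obtain ⟨xx, hxx⟩ : ((cov.L w).filter fun y => cov.HAdj c1 y).Nonempty := by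
        apply Finset.card_pos.mp
        rw [hX]
        have := hAu1w.2
        omega
      have hxxw : xx ∈ cov.L w := (Finset.mem_filter.mp hxx).1
      have hc1x : cov.HAdj c1 xx := (Finset.mem_filter.mp hxx).2
      have hY : ((cov.L u2).filter fun y => cov.HAdj xx y).card = G.e w u2 :=
        hfull w u2 hAwu2 xx hxxw
      obtain ⟨c2, hc2'⟩ : ((cov.L u2).filter fun y => cov.HAdj xx y).Nonempty := by
        apply Finset.card_pos.mp
        rw [hY]
        have := hAwu2.2
        omega
      have hc2 : c2 ∈ cov.L u2 := (Finset.mem_filter.mp hc2').1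
      have hxc2 : cov.HAdj xx c2 := (Finset.mem_filter.mp hc2').2
      have he0 : G.e u1 u2 = 0 := by
        by_contra h
        exact hnadj ⟨hne12, Nat.one_le_iff_ne_zero.mpr h⟩
      have hnadj12 : ¬ cov.HAdj c1 c2 := by
        intro h
        have hmem : c2 ∈ (cov.L u2).filter fun y => cov.HAdj c1 y :=
          Finset.mem_filter.mpr ⟨hc2, h⟩
        have hle := cov.matching u1 u2 hne12 c1 hc1
        rw [he0] at hle
        have := Finset.card_pos.mpr ⟨c2, hmem⟩
        omega
      have hPC0 := PC_pair cov hne12 hc1 hc2 hnadj12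
      have hzS0 : w ∉ ({u1, u2} : Finset V) := by
        simp only [Finset.mem_insert, Finset.mem_singleton, not_or]
        exact ⟨Ne.symm hu1w, Ne.symm hu2w⟩
      refine master cov hsize w {u1, u2} {c1, c2} hPC0 hzS0 (fun _ => 0) ?_ ?_
      · intro a haw haS
        exact ⟨w, adj_symm G (hw a haw), Or.inl rfl⟩
      · intro I hI hPCI
        refine hlast_save cov hsize hu1w hPCI (hI (Finset.mem_insert_self _ _)) hc1
          (D := ((cov.L w).filter fun y => cov.HAdj c1 y).erase xx) ?_ ?_
        · intro y hy
          by_cases hyx : y = xx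
          · subst hyx
            refine Finset.mem_union.mpr (Or.inr ((mem_blk cov).mpr
              ⟨hxxw, c2, ?_, cov.Hsymm _ _ hxc2⟩))
            refine Finset.mem_erase.mpr ⟨?_, hI (by simp)⟩
            exact fun h => Finset.disjoint_left.mp (cov.disjoint u1 u2 hne12) hc1 (h ▸ hc2)
          · exact Finset.mem_union.mpr (Or.inl (Finset.mem_erase.mpr ⟨hyx, hy⟩))
        · rw [Finset.card_erase_add_one hxx]
          exact le_of_eq hX
  · -- some deficient color
    push_neg at hfull
    obtain ⟨u, v, huv, x, hxL, hnecard⟩ := hfull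
    have hdef : ((cov.L v).filter fun y => cov.HAdj x y).card + 1 ≤ G.e u v := by
      have := cov.matching u v huv.1 x hxL
      omega
    have hPC0 : PC cov {u} {x} := PC_single cov hxL
    have hzS0 : v ∉ ({u} : Finset V) := by
      simp only [Finset.mem_singleton]
      exact Ne.symm huv.1
    have hlast : ∀ I, ({x} : Finset C) ⊆ I → PC cov (Finset.univ.erase v) I →
        (blk cov I v).card < (cov.L v).card := by
      intro I hI hPCI
      exact hlast_save cov hsize huv.1 hPCI (hI (Finset.mem_singleton_self x)) hxL
        Finset.subset_union_left hdef
    by_cases huw : u = w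
    · -- deficiency from the dominating vertex: order by distance in G - w
      subst huw
      have hconn := h2c.2.2 u
      have hvB : v ∈ ({u}ᶜ : Set V) := by
        simp only [Set.mem_compl_iff, Set.mem_singleton_iff]
        exact Ne.symm huv.1
      refine master cov hsize v {u} {x} hPC0 hzS0
        (fun a => if ha : a ∈ ({u}ᶜ : Set V) then
          (G.induce ({u}ᶜ : Set V)).toSimpleGraph.dist ⟨a, ha⟩ ⟨v, hvB⟩ else 0) ?_ hlast
      intro a hav haS
      have haw : a ≠ u := by simpa using haS
      have haB : a ∈ ({u}ᶜ : Set V) := by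
        simp only [Set.mem_compl_iff, Set.mem_singleton_iff]
        exact haw
      have hne' : (⟨a, haB⟩ : ({u}ᶜ : Set V)) ≠ ⟨v, hvB⟩ :=
        fun h => hav (congrArg Subtype.val h)
      obtain ⟨b, hadjb, hdlt⟩ := exists_adj_dist_lt hconn hne'
      refine ⟨b.1, ?_, ?_⟩
      · obtain ⟨hne2, hle⟩ : (G.induce ({u}ᶜ : Set V)).Adj ⟨a, haB⟩ b := hadjb
        exact ⟨fun h => hne2 (Subtype.ext h), hle⟩
      · by_cases hbv : b.1 = v
        · exact Or.inl hbv
        · refine Or.inr ⟨hbv, ?_, ?_⟩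
          · simp only [Finset.mem_singleton]
            intro h
            exact b.2 (by rw [h]; exact Set.mem_singleton u)
          · have hb2 : (b : V) ∈ ({u}ᶜ : Set V) := b.2
            simp only [dif_pos haB, dif_pos hb2]
            exact hdlt
    · -- deficiency from another vertex: dominating order
      refine master cov hsize v {u} {x} hPC0 hzS0 (fun a => if a = w then 0 else 1) ?_ hlast
      intro a hav haS
      have hau : a ≠ u := by simpa using haS
      by_cases haw : a = w
      · subst haw
        exact ⟨v, hw v (fun h => hav h.symm), Or.inl rfl⟩
      · by_cases hwv : w = v
        · refine ⟨v, ?_, Or.inl rfl⟩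
          rw [← hwv]
          exact adj_symm G (hw a haw)
        · refine ⟨w, adj_symm G (hw a haw), Or.inr ⟨hwv, ?_, ?_⟩⟩
          · simpa using Ne.symm huw
          · simp [haw]
end

section
/- Let G, G₁, G₂ be multigraphs and w a vertex with V(G) = V(G₁) ∪ V(G₂), V(G₁) ∩ V(G₂) = {w}, and e_G(u,v) = e_{G₁}(u,v) + e_{G₂}(u,v) for all u, v (where each e_{G_i} is extended by zero outside V(G_i)). If neither G₁ nor G₂ is DP-degree-colorable, then G is not DP-degree-colorable. -/
open scoped Classical

attribute [-instance] instDecidableEqSum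

namespace Glue

open Multigraph

variable {V C₁ C₂ : Type}

def inlE : C₁ ↪ C₁ ⊕ C₂ := ⟨Sum.inl, Sum.inl_injective⟩
def inrE : C₂ ↪ C₁ ⊕ C₂ := ⟨Sum.inr, Sum.inr_injective⟩

noncomputable def Lfun (G : Multigraph V) (V₁ V₂ : Set V)
    (cov₁ : Cover (G.induce V₁) C₁) (cov₂ : Cover (G.induce V₂) C₂) (v : V) :
    Finset (C₁ ⊕ C₂) :=
  (if h : v ∈ V₁ then (cov₁.L ⟨v, h⟩).map inlE else ∅) ∪
  (if h : v ∈ V₂ then (cov₂.L ⟨v, h⟩).map inrE else ∅)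

variable {G : Multigraph V} {V₁ V₂ : Set V}
  {cov₁ : Cover (G.induce V₁) C₁} {cov₂ : Cover (G.induce V₂) C₂}

lemma mem_Lfun_inl {a : C₁} {v : V} :
    Sum.inl a ∈ Lfun G V₁ V₂ cov₁ cov₂ v ↔ ∃ h : v ∈ V₁, a ∈ cov₁.L ⟨v, h⟩ := by
  unfold Lfun
  constructor
  · intro hx
    rcases Finset.mem_union.mp hx with hx | hx
    · split_ifs at hx with h
      · rcases Finset.mem_map.mp hx with ⟨b, hb, hba⟩
        cases hba; exact ⟨h, hb⟩
      · simp at hx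
    · split_ifs at hx with h
      · rcases Finset.mem_map.mp hx with ⟨b, hb, hba⟩
        simp [inrE] at hba
      · simp at hx
  · rintro ⟨h, ha⟩
    refine Finset.mem_union_left _ ?_
    rw [dif_pos h]
    exact Finset.mem_map_of_mem _ ha

lemma mem_Lfun_inr {a : C₂} {v : V} :
    Sum.inr a ∈ Lfun G V₁ V₂ cov₁ cov₂ v ↔ ∃ h : v ∈ V₂, a ∈ cov₂.L ⟨v, h⟩ := by
  unfold Lfun
  constructor
  · intro hx
    rcases Finset.mem_union.mp hx with hx | hx
    · split_ifs at hx with h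
      · rcases Finset.mem_map.mp hx with ⟨b, hb, hba⟩
        simp [inlE] at hba
      · simp at hx
    · split_ifs at hx with h
      · rcases Finset.mem_map.mp hx with ⟨b, hb, hba⟩
        cases hba; exact ⟨h, hb⟩
      · simp at hx
  · rintro ⟨h, ha⟩
    refine Finset.mem_union_right _ ?_
    rw [dif_pos h]
    exact Finset.mem_map_of_mem _ ha

end Glue

namespace Glue
open Multigraph
variable {V C₁ C₂ : Type}

noncomputable def glueCov (G : Multigraph V) (V₁ V₂ : Set V) (w : V)
    (hw1 : w ∈ V₁) (hw2 : w ∈ V₂) (hex : ∀ v, v ∈ V₁ → v ∈ V₂ → v = w)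
    (cov₁ : Cover (G.induce V₁) C₁) (cov₂ : Cover (G.induce V₂) C₂) :
    Cover G (C₁ ⊕ C₂) where
  L := Lfun G V₁ V₂ cov₁ cov₂
  HAdj x y := match x, y with
    | .inl a, .inl b => cov₁.HAdj a b
    | .inr a, .inr b => cov₂.HAdj a b
    | .inl a, .inr b => a ∈ cov₁.L ⟨w, hw1⟩ ∧ b ∈ cov₂.L ⟨w, hw2⟩
    | .inr a, .inl b => b ∈ cov₁.L ⟨w, hw1⟩ ∧ a ∈ cov₂.L ⟨w, hw2⟩
  Hsymm x y h := by
    rcases x with a | a <;> rcases y with b | b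
    · exact cov₁.Hsymm a b h
    · exact h
    · exact h
    · exact cov₂.Hsymm a b h
  Hirrefl x := by
    rcases x with a | a
    · exact cov₁.Hirrefl a
    · exact cov₂.Hirrefl a
  disjoint u v huv := by
    rw [Finset.disjoint_left]
    intro x hxu hxv
    have hne : ∀ (h : u ∈ V₁) (h' : v ∈ V₁), (⟨u, h⟩ : V₁) ≠ ⟨v, h'⟩ :=
      fun h h' he => huv (congrArg Subtype.val he)
    have hne2 : ∀ (h : u ∈ V₂) (h' : v ∈ V₂), (⟨u, h⟩ : V₂) ≠ ⟨v, h'⟩ :=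
      fun h h' he => huv (congrArg Subtype.val he)
    rcases x with a | a
    · obtain ⟨h, ha⟩ := mem_Lfun_inl.mp hxu
      obtain ⟨h', ha'⟩ := mem_Lfun_inl.mp hxv
      exact (Finset.disjoint_left.mp (cov₁.disjoint _ _ (hne h h')) ha) ha'
    · obtain ⟨h, ha⟩ := mem_Lfun_inr.mp hxu
      obtain ⟨h', ha'⟩ := mem_Lfun_inr.mp hxv
      exact (Finset.disjoint_left.mp (cov₂.disjoint _ _ (hne2 h h')) ha) ha'
  cliques v x hx y hy hxy := by
    rcases x with a | a <;> rcases y with b | b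
    · obtain ⟨h, ha⟩ := mem_Lfun_inl.mp hx
      obtain ⟨h', hb⟩ := mem_Lfun_inl.mp hy
      exact cov₁.cliques ⟨v, h⟩ a ha b hb (fun he => hxy (congrArg Sum.inl he))
    · obtain ⟨h, ha⟩ := mem_Lfun_inl.mp hx
      obtain ⟨h', hb⟩ := mem_Lfun_inr.mp hy
      obtain rfl := hex v h h'
      exact ⟨ha, hb⟩
    · obtain ⟨h, ha⟩ := mem_Lfun_inr.mp hx
      obtain ⟨h', hb⟩ := mem_Lfun_inl.mp hy
      obtain rfl := hex v h' h
      exact ⟨hb, ha⟩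
    · obtain ⟨h, ha⟩ := mem_Lfun_inr.mp hx
      obtain ⟨h', hb⟩ := mem_Lfun_inr.mp hy
      exact cov₂.cliques ⟨v, h⟩ a ha b hb (fun he => hxy (congrArg Sum.inr he))
  edges_within x y h := by
    rcases x with a | a <;> rcases y with b | b
    · obtain ⟨u, v, ha, hb, huv⟩ := cov₁.edges_within a b h
      refine ⟨u, v, mem_Lfun_inl.mpr ⟨u.2, ha⟩, mem_Lfun_inl.mpr ⟨v.2, hb⟩, ?_⟩
      rcases huv with he | hadj
      · exact Or.inl (congrArg Subtype.val he)
      · exact Or.inr ⟨fun he => hadj.1 (Subtype.ext he), hadj.2⟩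
    · exact ⟨w, w, mem_Lfun_inl.mpr ⟨hw1, h.1⟩, mem_Lfun_inr.mpr ⟨hw2, h.2⟩, Or.inl rfl⟩
    · exact ⟨w, w, mem_Lfun_inr.mpr ⟨hw2, h.2⟩, mem_Lfun_inl.mpr ⟨hw1, h.1⟩, Or.inl rfl⟩
    · obtain ⟨u, v, ha, hb, huv⟩ := cov₂.edges_within a b h
      refine ⟨u, v, mem_Lfun_inr.mpr ⟨u.2, ha⟩, mem_Lfun_inr.mpr ⟨v.2, hb⟩, ?_⟩
      rcases huv with he | hadj
      · exact Or.inl (congrArg Subtype.val he)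
      · exact Or.inr ⟨fun he => hadj.1 (Subtype.ext he), hadj.2⟩
  matching u v huv x hx := by
    rcases x with a | a
    · obtain ⟨hu1, ha⟩ := mem_Lfun_inl.mp hx
      by_cases hv1 : v ∈ V₁
      · have hsub : (Lfun G V₁ V₂ cov₁ cov₂ v).filter
            (fun y => match (Sum.inl a : C₁ ⊕ C₂), y with
              | .inl a, .inl b => cov₁.HAdj a b
              | .inr a, .inr b => cov₂.HAdj a b
              | .inl a, .inr b => a ∈ cov₁.L ⟨w, hw1⟩ ∧ b ∈ cov₂.L ⟨w, hw2⟩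
              | .inr a, .inl b => b ∈ cov₁.L ⟨w, hw1⟩ ∧ a ∈ cov₂.L ⟨w, hw2⟩) ⊆
            ((cov₁.L ⟨v, hv1⟩).filter (fun y => cov₁.HAdj a y)).map inlE := by
          intro y hy
          obtain ⟨hyL, hyA⟩ := Finset.mem_filter.mp hy
          rcases y with b | b
          · obtain ⟨h', hb⟩ := mem_Lfun_inl.mp hyL
            exact Finset.mem_map_of_mem _ (Finset.mem_filter.mpr ⟨hb, hyA⟩)
          · obtain ⟨h', hb⟩ := mem_Lfun_inr.mp hyL
            exfalso
            obtain rfl := hex v hv1 h'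
            have hune : u ≠ v := huv
            have : (⟨u, hu1⟩ : V₁) ≠ ⟨v, hw1⟩ := fun he => hune (congrArg Subtype.val he)
            exact (Finset.disjoint_left.mp (cov₁.disjoint _ _ this) ha) hyA.1
        calc _ ≤ (((cov₁.L ⟨v, hv1⟩).filter (fun y => cov₁.HAdj a y)).map inlE).card :=
              Finset.card_le_card hsub
          _ = ((cov₁.L ⟨v, hv1⟩).filter (fun y => cov₁.HAdj a y)).card := Finset.card_map _
          _ ≤ G.e u v := cov₁.matching ⟨u, hu1⟩ ⟨v, hv1⟩
              (fun he => huv (congrArg Subtype.val he)) a ha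
      · have : (Lfun G V₁ V₂ cov₁ cov₂ v).filter
            (fun y => match (Sum.inl a : C₁ ⊕ C₂), y with
              | .inl a, .inl b => cov₁.HAdj a b
              | .inr a, .inr b => cov₂.HAdj a b
              | .inl a, .inr b => a ∈ cov₁.L ⟨w, hw1⟩ ∧ b ∈ cov₂.L ⟨w, hw2⟩
              | .inr a, .inl b => b ∈ cov₁.L ⟨w, hw1⟩ ∧ a ∈ cov₂.L ⟨w, hw2⟩) = ∅ := by
          rw [Finset.filter_eq_empty_iff]
          intro y hyL
          rcases y with b | b
          · intro _
            exact hv1 (mem_Lfun_inl.mp hyL).1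
          · rintro ⟨haw, hbw⟩
            obtain ⟨h', hb⟩ := mem_Lfun_inr.mp hyL
            have hvw : v ≠ w := fun he => hv1 (he ▸ hw1)
            have : (⟨v, h'⟩ : V₂) ≠ ⟨w, hw2⟩ := fun he => hvw (congrArg Subtype.val he)
            exact (Finset.disjoint_left.mp (cov₂.disjoint _ _ this) hb) hbw
        rw [this]
        simp
    · obtain ⟨hu2, ha⟩ := mem_Lfun_inr.mp hx
      by_cases hv2 : v ∈ V₂
      · have hsub : (Lfun G V₁ V₂ cov₁ cov₂ v).filter
            (fun y => match (Sum.inr a : C₁ ⊕ C₂), y with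
              | .inl a, .inl b => cov₁.HAdj a b
              | .inr a, .inr b => cov₂.HAdj a b
              | .inl a, .inr b => a ∈ cov₁.L ⟨w, hw1⟩ ∧ b ∈ cov₂.L ⟨w, hw2⟩
              | .inr a, .inl b => b ∈ cov₁.L ⟨w, hw1⟩ ∧ a ∈ cov₂.L ⟨w, hw2⟩) ⊆
            ((cov₂.L ⟨v, hv2⟩).filter (fun y => cov₂.HAdj a y)).map inrE := by
          intro y hy
          obtain ⟨hyL, hyA⟩ := Finset.mem_filter.mp hy
          rcases y with b | b
          · obtain ⟨h', hb⟩ := mem_Lfun_inl.mp hyL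
            exfalso
            obtain rfl := hex v h' hv2
            have : (⟨u, hu2⟩ : V₂) ≠ ⟨v, hw2⟩ := fun he => huv (congrArg Subtype.val he)
            exact (Finset.disjoint_left.mp (cov₂.disjoint _ _ this) ha) hyA.2
          · obtain ⟨h', hb⟩ := mem_Lfun_inr.mp hyL
            exact Finset.mem_map_of_mem _ (Finset.mem_filter.mpr ⟨hb, hyA⟩)
        calc _ ≤ (((cov₂.L ⟨v, hv2⟩).filter (fun y => cov₂.HAdj a y)).map inrE).card :=
              Finset.card_le_card hsub
          _ = ((cov₂.L ⟨v, hv2⟩).filter (fun y => cov₂.HAdj a y)).card := Finset.card_map _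
          _ ≤ G.e u v := cov₂.matching ⟨u, hu2⟩ ⟨v, hv2⟩
              (fun he => huv (congrArg Subtype.val he)) a ha
      · have : (Lfun G V₁ V₂ cov₁ cov₂ v).filter
            (fun y => match (Sum.inr a : C₁ ⊕ C₂), y with
              | .inl a, .inl b => cov₁.HAdj a b
              | .inr a, .inr b => cov₂.HAdj a b
              | .inl a, .inr b => a ∈ cov₁.L ⟨w, hw1⟩ ∧ b ∈ cov₂.L ⟨w, hw2⟩
              | .inr a, .inl b => b ∈ cov₁.L ⟨w, hw1⟩ ∧ a ∈ cov₂.L ⟨w, hw2⟩) = ∅ := by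
          rw [Finset.filter_eq_empty_iff]
          intro y hyL
          rcases y with b | b
          · rintro ⟨hbw, haw⟩
            obtain ⟨h', hb⟩ := mem_Lfun_inl.mp hyL
            have hvw : v ≠ w := fun he => hv2 (he ▸ hw2)
            have : (⟨v, h'⟩ : V₁) ≠ ⟨w, hw1⟩ := fun he => hvw (congrArg Subtype.val he)
            exact (Finset.disjoint_left.mp (cov₁.disjoint _ _ this) hb) hbw
          · intro _
            exact hv2 (mem_Lfun_inr.mp hyL).1
        rw [this]
        simp
end Glue

namespace Glue
open Multigraph
variable {V C₁ C₂ : Type} [Fintype V]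
variable {G : Multigraph V} {V₁ V₂ : Set V}
  {cov₁ : Cover (G.induce V₁) C₁} {cov₂ : Cover (G.induce V₂) C₂}

lemma disj_maps (s : Finset C₁) (t : Finset C₂) :
    Disjoint (s.map (inlE : C₁ ↪ C₁ ⊕ C₂)) (t.map inrE) := by
  rw [Finset.disjoint_left]
  rintro x hx hy
  obtain ⟨a, _, rfl⟩ := Finset.mem_map.mp hx
  obtain ⟨b, _, hb⟩ := Finset.mem_map.mp hy
  simp [inlE, inrE] at hb

lemma card_Lfun (v : V) :
    (Lfun G V₁ V₂ cov₁ cov₂ v).card =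
      (if h : v ∈ V₁ then (cov₁.L ⟨v, h⟩).card else 0) +
      (if h : v ∈ V₂ then (cov₂.L ⟨v, h⟩).card else 0) := by
  unfold Lfun
  split_ifs with h1 h2 h2
  · rw [Finset.card_union_of_disjoint (disj_maps _ _), Finset.card_map, Finset.card_map]
  · simp
  · simp
  · simp

lemma sum_ite_mem_set (v : V) (B : Set V) (hB : v ∈ B) :
    ∑ u, (if u ∈ B then G.e v u else 0) = (G.induce B).deg ⟨v, hB⟩ := by
  have h1 : ∑ u, (if u ∈ B then G.e v u else 0) = ∑ u ∈ B.toFinset, G.e v u := by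
    rw [← Finset.sum_filter]
    congr 1
    ext u
    simp
  rw [h1, Finset.sum_subtype B.toFinset (fun x => Set.mem_toFinset) (fun u => G.e v u)]
  rfl

lemma deg_split (hex : ∀ v, v ∈ V₁ → v ∈ V₂ → v = w)
    (hedges : ∀ u v : V, G.e u v ≠ 0 → (u ∈ V₁ ∧ v ∈ V₁) ∨ (u ∈ V₂ ∧ v ∈ V₂)) (v : V) :
    G.deg v = (if h : v ∈ V₁ then (G.induce V₁).deg ⟨v, h⟩ else 0) +
      (if h : v ∈ V₂ then (G.induce V₂).deg ⟨v, h⟩ else 0) := by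
  have key : ∀ u, G.e v u =
      (if v ∈ V₁ ∧ u ∈ V₁ then G.e v u else 0) + (if v ∈ V₂ ∧ u ∈ V₂ then G.e v u else 0) := by
    intro u
    by_cases h1 : v ∈ V₁ ∧ u ∈ V₁ <;> by_cases h2 : v ∈ V₂ ∧ u ∈ V₂
    · obtain rfl := hex v h1.1 h2.1
      obtain rfl := hex u h1.2 h2.2
      simp [h1, h2, G.loopless]
    · simp [h1, h2]
    · simp [h1, h2]
    · by_cases he : G.e v u = 0
      · simp [h1, h2, he]
      · rcases hedges v u he with h | h
        · exact absurd h h1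
        · exact absurd h h2
  have : G.deg v = ∑ u, ((if v ∈ V₁ ∧ u ∈ V₁ then G.e v u else 0) +
      (if v ∈ V₂ ∧ u ∈ V₂ then G.e v u else 0)) := by
    unfold deg
    exact Finset.sum_congr rfl fun u _ => key u
  rw [this, Finset.sum_add_distrib]
  congr 1
  · by_cases h : v ∈ V₁
    · rw [dif_pos h, ← sum_ite_mem_set v V₁ h]
      exact Finset.sum_congr rfl fun u _ => by simp [h]
    · rw [dif_neg h]
      refine Finset.sum_eq_zero fun u _ => ?_
      simp [h]
  · by_cases h : v ∈ V₂
    · rw [dif_pos h, ← sum_ite_mem_set v V₂ h]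
      exact Finset.sum_congr rfl fun u _ => by simp [h]
    · rw [dif_neg h]
      refine Finset.sum_eq_zero fun u _ => ?_
      simp [h]

end Glue

namespace Glue
open Multigraph
set_option linter.unusedSectionVars false

variable {V C₁ C₂ : Type} [Fintype V]
variable {G : Multigraph V} {V₁ V₂ : Set V} {w : V}
  {cov₁ : Cover (G.induce V₁) C₁} {cov₂ : Cover (G.induce V₂) C₂}

lemma extract₁ (hw1 : w ∈ V₁) (hw2 : w ∈ V₂) (hex : ∀ v, v ∈ V₁ → v ∈ V₂ → v = w)
    (I : Finset (C₁ ⊕ C₂)) (hI : (glueCov G V₁ V₂ w hw1 hw2 hex cov₁ cov₂).IsColoring I)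
    (c : C₁) (hsing : I ∩ Lfun G V₁ V₂ cov₁ cov₂ w = {Sum.inl c}) :
    cov₁.Colorable := by
  classical
  obtain ⟨hmem, hind, hcard⟩ := hI
  set I₁ : Finset C₁ := I.preimage Sum.inl (Sum.inl_injective.injOn) with hI₁
  have memI₁ : ∀ a : C₁, a ∈ I₁ ↔ Sum.inl a ∈ I := fun a => Finset.mem_preimage
  have hcw : Sum.inl c ∈ I ∩ Lfun G V₁ V₂ cov₁ cov₂ w := by
    rw [hsing]; exact Finset.mem_singleton_self _
  refine ⟨I₁, ?_, ?_, ?_⟩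
  · intro a ha
    obtain ⟨v, hv⟩ := hmem (Sum.inl a) ((memI₁ a).mp ha)
    obtain ⟨h, ha'⟩ := mem_Lfun_inl.mp hv
    exact ⟨⟨v, h⟩, ha'⟩
  · intro a ha b hb hadj
    exact hind (Sum.inl a) ((memI₁ a).mp ha) (Sum.inl b) ((memI₁ b).mp hb) hadj
  · intro v
    by_cases hvw : (v : V) = w
    · obtain rfl : v = ⟨w, hw1⟩ := Subtype.ext hvw
      have : I₁ ∩ cov₁.L ⟨w, hw1⟩ = {c} := by
        ext a
        constructor
        · intro ha
          obtain ⟨haI, haL⟩ := Finset.mem_inter.mp ha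
          have : Sum.inl a ∈ I ∩ Lfun G V₁ V₂ cov₁ cov₂ w :=
            Finset.mem_inter.mpr ⟨(memI₁ a).mp haI, mem_Lfun_inl.mpr ⟨hw1, haL⟩⟩
          rw [hsing, Finset.mem_singleton] at this
          rw [Finset.mem_singleton]
          exact Sum.inl_injective this
        · intro ha
          rw [Finset.mem_singleton] at ha
          subst ha
          obtain ⟨hcI, hcL⟩ := Finset.mem_inter.mp hcw
          obtain ⟨h', hc'⟩ := mem_Lfun_inl.mp hcL
          exact Finset.mem_inter.mpr ⟨(memI₁ a).mpr hcI, hc'⟩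
      rw [this, Finset.card_singleton]
    · have hmap : (I₁ ∩ cov₁.L v).map (inlE : C₁ ↪ C₁ ⊕ C₂) =
          I ∩ Lfun G V₁ V₂ cov₁ cov₂ (v : V) := by
        ext x
        constructor
        · intro hx
          obtain ⟨a, ha, rfl⟩ := Finset.mem_map.mp hx
          obtain ⟨haI, haL⟩ := Finset.mem_inter.mp ha
          refine Finset.mem_inter.mpr ⟨(memI₁ a).mp haI, mem_Lfun_inl.mpr ⟨v.2, haL⟩⟩
        · intro hx
          obtain ⟨hxI, hxL⟩ := Finset.mem_inter.mp hx
          rcases x with a | a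
          · obtain ⟨h, ha⟩ := mem_Lfun_inl.mp hxL
            exact Finset.mem_map_of_mem _
              (Finset.mem_inter.mpr ⟨(memI₁ a).mpr hxI, ha⟩)
          · obtain ⟨h, _⟩ := mem_Lfun_inr.mp hxL
            exact absurd (hex _ v.2 h) hvw
      have hthis : (I ∩ Lfun G V₁ V₂ cov₁ cov₂ (v : V)).card = 1 := hcard (v : V)
      rw [← hmap, Finset.card_map] at hthis
      exact hthis

lemma extract₂ (hw1 : w ∈ V₁) (hw2 : w ∈ V₂) (hex : ∀ v, v ∈ V₁ → v ∈ V₂ → v = w)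
    (I : Finset (C₁ ⊕ C₂)) (hI : (glueCov G V₁ V₂ w hw1 hw2 hex cov₁ cov₂).IsColoring I)
    (c : C₂) (hsing : I ∩ Lfun G V₁ V₂ cov₁ cov₂ w = {Sum.inr c}) :
    cov₂.Colorable := by
  classical
  obtain ⟨hmem, hind, hcard⟩ := hI
  set I₂ : Finset C₂ := I.preimage Sum.inr (Sum.inr_injective.injOn) with hI₂
  have memI₂ : ∀ a : C₂, a ∈ I₂ ↔ Sum.inr a ∈ I := fun a => Finset.mem_preimage
  have hcw : Sum.inr c ∈ I ∩ Lfun G V₁ V₂ cov₁ cov₂ w := by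
    rw [hsing]; exact Finset.mem_singleton_self _
  refine ⟨I₂, ?_, ?_, ?_⟩
  · intro a ha
    obtain ⟨v, hv⟩ := hmem (Sum.inr a) ((memI₂ a).mp ha)
    obtain ⟨h, ha'⟩ := mem_Lfun_inr.mp hv
    exact ⟨⟨v, h⟩, ha'⟩
  · intro a ha b hb hadj
    exact hind (Sum.inr a) ((memI₂ a).mp ha) (Sum.inr b) ((memI₂ b).mp hb) hadj
  · intro v
    by_cases hvw : (v : V) = w
    · obtain rfl : v = ⟨w, hw2⟩ := Subtype.ext hvw
      have : I₂ ∩ cov₂.L ⟨w, hw2⟩ = {c} := by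
        ext a
        constructor
        · intro ha
          obtain ⟨haI, haL⟩ := Finset.mem_inter.mp ha
          have : Sum.inr a ∈ I ∩ Lfun G V₁ V₂ cov₁ cov₂ w :=
            Finset.mem_inter.mpr ⟨(memI₂ a).mp haI, mem_Lfun_inr.mpr ⟨hw2, haL⟩⟩
          rw [hsing, Finset.mem_singleton] at this
          rw [Finset.mem_singleton]
          exact Sum.inr_injective this
        · intro ha
          rw [Finset.mem_singleton] at ha
          subst ha
          obtain ⟨hcI, hcL⟩ := Finset.mem_inter.mp hcw
          obtain ⟨h', hc'⟩ := mem_Lfun_inr.mp hcL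
          exact Finset.mem_inter.mpr ⟨(memI₂ a).mpr hcI, hc'⟩
      rw [this, Finset.card_singleton]
    · have hmap : (I₂ ∩ cov₂.L v).map (inrE : C₂ ↪ C₁ ⊕ C₂) =
          I ∩ Lfun G V₁ V₂ cov₁ cov₂ (v : V) := by
        ext x
        constructor
        · intro hx
          obtain ⟨a, ha, rfl⟩ := Finset.mem_map.mp hx
          obtain ⟨haI, haL⟩ := Finset.mem_inter.mp ha
          refine Finset.mem_inter.mpr ⟨(memI₂ a).mp haI, mem_Lfun_inr.mpr ⟨v.2, haL⟩⟩
        · intro hx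
          obtain ⟨hxI, hxL⟩ := Finset.mem_inter.mp hx
          rcases x with a | a
          · obtain ⟨h, _⟩ := mem_Lfun_inl.mp hxL
            exact absurd (hex _ h v.2) hvw
          · obtain ⟨h, ha⟩ := mem_Lfun_inr.mp hxL
            exact Finset.mem_map_of_mem _
              (Finset.mem_inter.mpr ⟨(memI₂ a).mpr hxI, ha⟩)
      have hthis : (I ∩ Lfun G V₁ V₂ cov₁ cov₂ (v : V)).card = 1 := hcard (v : V)
      rw [← hmap, Finset.card_map] at hthis
      exact hthis

end Glue


open Multigraph in
/-- **Lemma (gluing).** Suppose `G` is the union of multigraphs `G₁ = G[V₁]` and `G₂ = G[V₂]`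
sharing exactly one vertex `w` (so `V₁ ∪ V₂ = V(G)`, `V₁ ∩ V₂ = {w}` and every edge of `G` lies
within `V₁` or within `V₂`). If neither `G₁` nor `G₂` is DP-degree-colorable, then `G` is not
DP-degree-colorable. -/
theorem statement11 {V : Type} [Fintype V] (G : Multigraph V) (V₁ V₂ : Set V) (w : V)
    (hunion : V₁ ∪ V₂ = Set.univ) (hinter : V₁ ∩ V₂ = {w})
    (hedges : ∀ u v : V, G.e u v ≠ 0 → (u ∈ V₁ ∧ v ∈ V₁) ∨ (u ∈ V₂ ∧ v ∈ V₂))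
    (h1 : ¬ DPDegreeColorable (G.induce V₁))
    (h2 : ¬ DPDegreeColorable (G.induce V₂)) :
    ¬ DPDegreeColorable G := by
  have hw : w ∈ V₁ ∩ V₂ := by rw [hinter]; exact Set.mem_singleton w
  have hw1 : w ∈ V₁ := hw.1
  have hw2 : w ∈ V₂ := hw.2
  have hex : ∀ v, v ∈ V₁ → v ∈ V₂ → v = w := fun v h h' => by
    have : v ∈ V₁ ∩ V₂ := ⟨h, h'⟩
    rwa [hinter] at this
  rw [DPDegreeColorable] at h1 h2
  push_neg at h1 h2
  obtain ⟨C₁, cov₁, hdeg₁, hnc₁⟩ := h1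
  obtain ⟨C₂, cov₂, hdeg₂, hnc₂⟩ := h2
  intro hDP
  have hdeg : ∀ v, G.deg v ≤ ((Glue.glueCov G V₁ V₂ w hw1 hw2 hex cov₁ cov₂).L v).card := by
    intro v
    show G.deg v ≤ (Glue.Lfun G V₁ V₂ cov₁ cov₂ v).card
    rw [Glue.card_Lfun, Glue.deg_split hex hedges v]
    refine Nat.add_le_add ?_ ?_
    · by_cases h : v ∈ V₁
      · rw [dif_pos h, dif_pos h]; exact hdeg₁ ⟨v, h⟩
      · rw [dif_neg h, dif_neg h]
    · by_cases h : v ∈ V₂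
      · rw [dif_pos h, dif_pos h]; exact hdeg₂ ⟨v, h⟩
      · rw [dif_neg h, dif_neg h]
  obtain ⟨I, hI⟩ := hDP (C₁ ⊕ C₂) (Glue.glueCov G V₁ V₂ w hw1 hw2 hex cov₁ cov₂) hdeg
  have hcw := hI.2.2 w
  obtain ⟨x, hx⟩ := Finset.card_eq_one.mp hcw
  rcases x with c | c
  · exact hnc₁ (Glue.extract₁ hw1 hw2 hex I hI c hx)
  · exact hnc₂ (Glue.extract₂ hw1 hw2 hex I hI c hx)
end

section
/- Let k ≥ 4 and let T be an n-vertex GDP-tree with maximum degree Δ(T) ≤ k−1 that does not contain the complete graph K_k as a subgraph. Then 2|E(T)| ≤ (k − 2 + 2/(k−1))·n. -/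
open scoped Classical
set_option linter.unusedSectionVars false

section DEFS
/-- `S[B]` is connected and has no cut vertex. -/
def SGNonseparable {V : Type} (S : SimpleGraph V) (B : Set V) : Prop :=
  B.Nonempty ∧ (S.induce B).Connected ∧
    ∀ v ∈ B, (S.induce (B \ {v})).Preconnected

/-- A block of a simple graph: a maximal vertex set inducing a connected subgraph with no
cut vertex. -/
def SGIsBlock {V : Type} (S : SimpleGraph V) (B : Set V) : Prop :=
  SGNonseparable S B ∧ ∀ B', B ⊆ B' → SGNonseparable S B' → B' = B
end DEFS

variable {V : Type} [Fintype V]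

variable {V : Type} [Fintype V]

variable {V : Type} [Fintype V]

/-- Reachability inside a vertex set `X`. -/
def Reach (H : SimpleGraph V) (X : Set V) (a b : V) : Prop :=
  ∃ p : H.Walk a b, ∀ z ∈ p.support, z ∈ X

namespace Reach

variable {H : SimpleGraph V} {X Y : Set V} {a b c : V}

lemma left (h : Reach H X a b) : a ∈ X := by
  obtain ⟨p, hp⟩ := h; exact hp _ p.start_mem_support

lemma right (h : Reach H X a b) : b ∈ X := by
  obtain ⟨p, hp⟩ := h; exact hp _ p.end_mem_support

lemma refl (ha : a ∈ X) : Reach H X a a :=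
  ⟨SimpleGraph.Walk.nil, by simp [ha]⟩

lemma symm (h : Reach H X a b) : Reach H X b a := by
  obtain ⟨p, hp⟩ := h
  exact ⟨p.reverse, by simpa using hp⟩

lemma trans (h : Reach H X a b) (h' : Reach H X b c) : Reach H X a c := by
  obtain ⟨p, hp⟩ := h; obtain ⟨q, hq⟩ := h'
  refine ⟨p.append q, ?_⟩
  intro z hz
  rcases (SimpleGraph.Walk.mem_support_append_iff _ _).1 hz with h | h
  · exact hp _ h
  · exact hq _ h

lemma mono (hXY : X ⊆ Y) (h : Reach H X a b) : Reach H Y a b := by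
  obtain ⟨p, hp⟩ := h; exact ⟨p, fun z hz => hXY (hp z hz)⟩

lemma of_adj (h : H.Adj a b) (ha : a ∈ X) (hb : b ∈ X) : Reach H X a b := by
  refine ⟨h.toWalk, ?_⟩
  intro z hz
  simp only [SimpleGraph.Walk.support_cons, SimpleGraph.Walk.support_nil,
    List.mem_cons, List.mem_singleton, List.not_mem_nil] at hz
  rcases hz with rfl | rfl | h
  · exact ha
  · exact hb
  · exact h.elim

/-- change the graph along a walk -/
lemma congr {H' : SimpleGraph V}
    (hadj : ∀ u v, u ∈ X → v ∈ X → H.Adj u v → H'.Adj u v)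
    (h : Reach H X a b) : Reach H' X a b := by
  obtain ⟨p, hp⟩ := h
  induction p with
  | nil => exact refl (by simpa using hp)
  | @cons u w v huw p ih =>
    have hu : u ∈ X := hp _ (by simp)
    have hw : w ∈ X := hp _ (by simp)
    have h1 : Reach H' X u w := of_adj (hadj _ _ hu hw huw) hu hw
    exact h1.trans (ih (fun z hz => hp _ (by simp [hz])))

end Reach

section Bridge

variable {H : SimpleGraph V} {X : Set V}

lemma reach_of_induce_reachable {a b : V} (ha : a ∈ X) (hb : b ∈ X)
    (h : (H.induce X).Reachable ⟨a, ha⟩ ⟨b, hb⟩) : Reach H X a b := by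
  obtain ⟨p⟩ := h
  refine ⟨p.map ⟨Subtype.val, fun {u v} h => h⟩, ?_⟩
  intro z hz
  rw [SimpleGraph.Walk.support_map] at hz
  obtain ⟨z', _, rfl⟩ := List.mem_map.1 hz
  exact z'.2

lemma induce_reachable_of_reach {a b : V} (h : Reach H X a b) :
    (H.induce X).Reachable ⟨a, h.left⟩ ⟨b, h.right⟩ := by
  obtain ⟨p, hp⟩ := h
  induction p with
  | nil => rfl
  | @cons u w v huw p ih =>
    have hu : u ∈ X := hp _ (by simp)
    have hw : w ∈ X := hp _ (by simp)
    have hp' : ∀ z ∈ p.support, z ∈ X := fun z hz => hp _ (by simp [hz])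
    have h1 : (H.induce X).Adj ⟨u, hu⟩ ⟨w, hw⟩ := huw
    exact (h1.reachable).trans (ih hp')

lemma preconnected_induce_iff :
    (H.induce X).Preconnected ↔ ∀ a ∈ X, ∀ b ∈ X, Reach H X a b := by
  constructor
  · intro h a ha b hb
    exact reach_of_induce_reachable ha hb (h ⟨a, ha⟩ ⟨b, hb⟩)
  · intro h a b
    have := induce_reachable_of_reach (h a a.2 b b.2)
    simpa using this

lemma connected_induce_iff :
    (H.induce X).Connected ↔ X.Nonempty ∧ ∀ a ∈ X, ∀ b ∈ X, Reach H X a b := by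
  rw [SimpleGraph.connected_iff, preconnected_induce_iff]
  constructor
  · rintro ⟨h1, h2⟩; exact ⟨Set.nonempty_coe_sort.1 h2, h1⟩
  · rintro ⟨h1, h2⟩; exact ⟨h2, Set.nonempty_coe_sort.2 h1⟩

end Bridge

/-- Nonseparability in terms of `Reach`. -/
def NS (H : SimpleGraph V) (B : Set V) : Prop :=
  B.Nonempty ∧ (∀ a ∈ B, ∀ b ∈ B, Reach H B a b) ∧
    ∀ v ∈ B, ∀ a ∈ B \ {v}, ∀ b ∈ B \ {v}, Reach H (B \ {v}) a b

lemma sgNonseparable_iff_ns {H : SimpleGraph V} {B : Set V} :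
    SGNonseparable H B ↔ NS H B := by
  unfold SGNonseparable NS
  rw [connected_induce_iff]
  constructor
  · rintro ⟨h1, ⟨_, h2⟩, h3⟩
    exact ⟨h1, h2, fun v hv a ha b hb =>
      (preconnected_induce_iff).1 (h3 v hv) a ha b hb⟩
  · rintro ⟨h1, h2, h3⟩
    refine ⟨h1, ⟨h1, h2⟩, fun v hv => (preconnected_induce_iff).2 (h3 v hv)⟩

namespace NS

variable {H : SimpleGraph V} {B B₁ B₂ : Set V} {a b v w : V}

lemma reach_del (h : NS H B) (ha : a ∈ B \ {w}) (hb : b ∈ B \ {w}) :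
    Reach H (B \ {w}) a b := by
  by_cases hw : w ∈ B
  · exact h.2.2 w hw a ha b hb
  · have hBw : B \ {w} = B := Set.diff_singleton_eq_self hw
    rw [hBw]
    exact h.2.1 a ha.1 b hb.1

lemma single (hv : True) : NS H {v} := by
  refine ⟨⟨v, rfl⟩, ?_, ?_⟩
  · rintro a rfl b rfl; exact Reach.refl rfl
  · rintro x rfl a ⟨rfl, ha⟩ b hb; simp at ha

lemma pair (h : H.Adj a b) : NS H {a, b} := by
  have hab : a ≠ b := h.ne
  refine ⟨⟨a, by simp⟩, ?_, ?_⟩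
  · rintro x hx y hy
    rcases hx with rfl | rfl <;> rcases hy with rfl | rfl
    · exact Reach.refl (by simp)
    · exact Reach.of_adj h (by simp) (by simp)
    · exact (Reach.of_adj h (by simp) (by simp)).symm
    · exact Reach.refl (by simp)
  · rintro v hv x hx y hy
    have : x = y := by
      rcases hv with rfl | rfl
      · rcases hx.1 with rfl | rfl
        · exact absurd rfl hx.2
        · rcases hy.1 with rfl | rfl
          · exact absurd rfl hy.2
          · rfl
      · rcases hx.1 with rfl | rfl
        · rcases hy.1 with rfl | rfl
          · rfl
          · exact absurd rfl hy.2
        · exact absurd rfl hx.2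
    subst this
    exact Reach.refl hx

/-- union of two nonseparable sets sharing at least two vertices -/
lemma union (h1 : NS H B₁) (h2 : NS H B₂) (hu : a ∈ B₁ ∩ B₂) (hv : b ∈ B₁ ∩ B₂)
    (hab : a ≠ b) : NS H (B₁ ∪ B₂) := by
  have key : ∀ w, ∀ z ∈ (B₁ ∪ B₂) \ {w}, ∀ c, c ∈ (B₁ ∩ B₂) \ {w} →
      Reach H ((B₁ ∪ B₂) \ {w}) z c := by
    intro w z hz c hc
    rcases hz.1 with hz1 | hz1
    · have : Reach H (B₁ \ {w}) z c :=
        h1.reach_del ⟨hz1, hz.2⟩ ⟨hc.1.1, hc.2⟩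
      exact this.mono (fun t ht => ⟨Or.inl ht.1, ht.2⟩)
    · have : Reach H (B₂ \ {w}) z c :=
        h2.reach_del ⟨hz1, hz.2⟩ ⟨hc.1.2, hc.2⟩
      exact this.mono (fun t ht => ⟨Or.inr ht.1, ht.2⟩)
  refine ⟨⟨a, Or.inl hu.1⟩, ?_, ?_⟩
  · intro x hx y hy
    have hx' : x ∈ (B₁ ∪ B₂) := hx
    -- connect via a; use key with a dummy w ∉ B₁ ∪ B₂? simpler: direct
    have r1 : Reach H (B₁ ∪ B₂) x a := by
      rcases hx with hx | hx
      · exact (h1.2.1 x hx a hu.1).mono Set.subset_union_left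
      · exact (h2.2.1 x hx a hu.2).mono Set.subset_union_right
    have r2 : Reach H (B₁ ∪ B₂) y a := by
      rcases hy with hy | hy
      · exact (h1.2.1 y hy a hu.1).mono Set.subset_union_left
      · exact (h2.2.1 y hy a hu.2).mono Set.subset_union_right
    exact r1.trans r2.symm
  · intro w hw x hx y hy
    set c : V := if a = w then b else a with hc
    have hcmem : c ∈ (B₁ ∩ B₂) \ {w} := by
      by_cases hcw : a = w
      · simp only [hc, if_pos hcw]
        exact ⟨hv, fun e => hab (by rw [hcw, e])⟩
      · simp only [hc, if_neg hcw]
        exact ⟨hu, hcw⟩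
    exact (key w x hx c hcmem).trans (key w y hy c hcmem).symm

end NS

/-- every nonseparable set extends to a block -/
lemma exists_block_superset {H : SimpleGraph V} {C : Set V} (h : NS H C) :
    ∃ B, SGIsBlock H B ∧ C ⊆ B := by
  set S : Set (Set V) := {B | C ⊆ B ∧ NS H B} with hS
  have hfin : S.Finite := Set.toFinite S
  have hne : S.Nonempty := ⟨C, subset_refl _, h⟩
  obtain ⟨B, hBS, hmax⟩ := Set.Finite.exists_maximalFor (fun B => B.ncard) S hfin hne
  refine ⟨B, ⟨(sgNonseparable_iff_ns).2 hBS.2, ?_⟩, hBS.1⟩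
  intro B' hBB' hB'
  have hB'S : B' ∈ S := ⟨hBS.1.trans hBB', (sgNonseparable_iff_ns).1 hB'⟩
  have hle : B.ncard ≤ B'.ncard := Set.ncard_le_ncard hBB' (Set.toFinite _)
  have := hmax hB'S hle
  exact (Set.eq_of_subset_of_ncard_le hBB' this (Set.toFinite _)).symm

/-- a nonseparable set with at least 3 vertices has min degree 2 inside -/
lemma ns_two_nbrs {H : SimpleGraph V} {B : Set V} (h : NS H B) (h3 : 3 ≤ B.ncard)
    {v : V} (hv : v ∈ B) : ∃ x y, x ∈ B ∧ y ∈ B ∧ x ≠ y ∧ H.Adj v x ∧ H.Adj v y := by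
  -- first neighbor
  obtain ⟨b, hb, hbv⟩ : ∃ b ∈ B, b ≠ v := by
    have : 1 < B.ncard := by omega
    exact Set.exists_ne_of_one_lt_ncard this v
  obtain ⟨p, hp⟩ := h.2.1 v hv b hb
  obtain ⟨x, hxB, hx⟩ : ∃ x, x ∈ B ∧ H.Adj v x := by
    cases p with
    | nil => exact absurd rfl (Ne.symm hbv)
    | cons h' p' => exact ⟨_, hp _ (by simp), h'⟩
  -- second neighbor
  by_contra hcon
  push_neg at hcon
  have honly : ∀ y ∈ B, H.Adj v y → y = x := by
    intro y hy hadj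
    by_contra hne
    exact (hcon x y hxB hy (fun e => hne e.symm) hx) hadj
  -- pick c ∈ B, c ≠ v, c ≠ x
  obtain ⟨c, hc, hcv, hcx⟩ : ∃ c ∈ B, c ≠ v ∧ c ≠ x := by
    have hle : B.ncard ≤ (B \ {v, x}).ncard + ({v, x} : Set V).ncard :=
      Set.ncard_le_ncard_diff_add_ncard B _ (Set.toFinite _)
    have h2 : ({v, x} : Set V).ncard ≤ 2 := by
      have := Set.ncard_insert_le v ({x} : Set V)
      simpa using this
    have hpos : 0 < (B \ {v, x}).ncard := by omega
    obtain ⟨c, hc⟩ := (Set.ncard_pos (Set.toFinite _)).1 hpos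
    refine ⟨c, hc.1, ?_, ?_⟩
    · intro e; exact hc.2 (by simp [e])
    · intro e; exact hc.2 (by simp [e])
  have hvx : v ≠ x := hx.ne
  obtain ⟨q, hq⟩ := h.reach_del (w := x) ⟨hv, hvx⟩ ⟨hc, hcx⟩
  cases q with
  | nil => exact hcv rfl
  | @cons _ ww _ h' q' =>
    have hwB : ww ∈ B \ {x} := hq _ (by simp)
    exact hwB.2 (honly ww hwB.1 h')

section PathLemmas
open SimpleGraph Walk

variable {H : SimpleGraph V} {u v a w : V}

lemma path_start_not_mem_dropUntil {p : H.Walk u v} (hp : p.IsPath)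
    (ha : a ∈ p.support) (hau : a ≠ u) : u ∉ (p.dropUntil a ha).support := by
  intro hu
  have hspec := p.take_spec ha
  have hsupp : p.support = (p.takeUntil a ha).support ++ (p.dropUntil a ha).support.tail := by
    conv_lhs => rw [← hspec]
    exact SimpleGraph.Walk.support_append _ _
  have hnd : p.support.Nodup := hp.support_nodup
  rw [hsupp] at hnd
  have hdisj := List.disjoint_of_nodup_append hnd
  have hu1 : u ∈ (p.takeUntil a ha).support := SimpleGraph.Walk.start_mem_support _
  have : u ∈ (p.dropUntil a ha).support.tail := by
    have := SimpleGraph.Walk.support_eq_cons (p.dropUntil a ha)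
    rw [this] at hu
    rcases List.mem_cons.1 hu with h | h
    · exact absurd h.symm hau
    · exact h
  exact hdisj hu1 this

lemma path_end_not_mem_takeUntil {p : H.Walk u v} (hp : p.IsPath)
    (ha : a ∈ p.support) (hav : a ≠ v) : v ∉ (p.takeUntil a ha).support := by
  intro hv
  have hspec := p.take_spec ha
  have hsupp : p.support = (p.takeUntil a ha).support ++ (p.dropUntil a ha).support.tail := by
    conv_lhs => rw [← hspec]
    exact SimpleGraph.Walk.support_append _ _
  have hnd : p.support.Nodup := hp.support_nodup
  rw [hsupp] at hnd
  have hdisj := List.disjoint_of_nodup_append hnd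
  have hv2 : v ∈ (p.dropUntil a ha).support := SimpleGraph.Walk.end_mem_support _
  have : v ∈ (p.dropUntil a ha).support.tail := by
    have := SimpleGraph.Walk.support_eq_cons (p.dropUntil a ha)
    rw [this] at hv2
    rcases List.mem_cons.1 hv2 with h | h
    · exact absurd h.symm hav
    · exact h
  exact hdisj hv this

/-- In a path, any vertex `a ≠ w` can reach one of the two endpoints avoiding `w`. -/
lemma path_split {p : H.Walk u v} (hp : p.IsPath) (hw : w ∈ p.support)
    (ha : a ∈ p.support) (haw : a ≠ w) :
    (∃ q : H.Walk u a, q.support ⊆ p.support ∧ w ∉ q.support) ∨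
    (∃ q : H.Walk a v, q.support ⊆ p.support ∧ w ∉ q.support) := by
  have hspec := p.take_spec hw
  have hsupp : p.support = (p.takeUntil w hw).support ++ (p.dropUntil w hw).support.tail := by
    conv_lhs => rw [← hspec]
    exact SimpleGraph.Walk.support_append _ _
  have hmem : a ∈ (p.takeUntil w hw).support ∨ a ∈ (p.dropUntil w hw).support := by
    rw [hsupp] at ha
    rcases List.mem_append.1 ha with h | h
    · exact Or.inl h
    · exact Or.inr (List.mem_of_mem_tail h)
  rcases hmem with hmem | hmem
  · left
    refine ⟨(p.takeUntil w hw).takeUntil a hmem, ?_, ?_⟩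
    · exact List.Subset.trans (SimpleGraph.Walk.support_takeUntil_subset _ _)
        (SimpleGraph.Walk.support_takeUntil_subset _ _)
    · exact path_end_not_mem_takeUntil (hp.takeUntil hw) hmem haw
  · right
    refine ⟨(p.dropUntil w hw).dropUntil a hmem, ?_, ?_⟩
    · exact List.Subset.trans (SimpleGraph.Walk.support_dropUntil_subset _ _)
        (SimpleGraph.Walk.support_dropUntil_subset _ _)
    · exact path_start_not_mem_dropUntil (hp.dropUntil hw) hmem haw

/-- first-hit decomposition of a walk w.r.t. a set `S` containing the endpoint. -/
lemma first_hit {S : Set V} : ∀ {a b : V} (p : H.Walk a b), b ∈ S →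
    ∃ s ∈ S, ∃ q : H.Walk a s, q.support ⊆ p.support ∧
      ∀ x ∈ q.support, x ≠ s → x ∉ S := by
  intro a b p
  induction p with
  | nil =>
    intro hb
    refine ⟨_, hb, SimpleGraph.Walk.nil, by simp, ?_⟩
    intro x hx hxs
    simp only [SimpleGraph.Walk.support_nil, List.mem_singleton] at hx
    exact absurd hx hxs
  | @cons x y z hxy p ih =>
    intro hb
    by_cases hx : x ∈ S
    · refine ⟨x, hx, SimpleGraph.Walk.nil, by simp, ?_⟩
      intro t ht hts
      simp only [SimpleGraph.Walk.support_nil, List.mem_singleton] at ht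
      exact absurd ht hts
    · obtain ⟨s, hs, q, hq1, hq2⟩ := ih hb
      refine ⟨s, hs, SimpleGraph.Walk.cons hxy q, ?_, ?_⟩
      · intro t ht
        rw [SimpleGraph.Walk.support_cons] at ht ⊢
        rcases List.mem_cons.1 ht with h1 | h1
        · exact List.mem_cons.2 (Or.inl h1)
        · exact List.mem_cons.2 (Or.inr (hq1 h1))
      · intro t ht htne
        rw [SimpleGraph.Walk.support_cons] at ht
        rcases List.mem_cons.1 ht with h1 | h1
        · rw [h1]; exact hx
        · exact hq2 t h1 htne

end PathLemmas

section Ear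

variable {H : SimpleGraph V} {B : Set V} {u v : V}

/-- Attaching an ear (path internally disjoint from `B`) to a nonseparable set
keeps it nonseparable. -/
lemma ns_union_path (h : NS H B) (hu : u ∈ B) (hv : v ∈ B) (huv : u ≠ v)
    (p : H.Walk u v) (hp : p.IsPath)
    (hsup : ∀ z ∈ p.support, z ∈ B → z = u ∨ z = v) :
    NS H (B ∪ {z | z ∈ p.support}) := by
  set S : Set V := {z | z ∈ p.support} with hSdef
  set D : Set V := B ∪ S with hDdef
  have huS : u ∈ S := p.start_mem_support
  have hvS : v ∈ S := p.end_mem_support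
  have hBD : B ⊆ D := Set.subset_union_left
  have hSD : S ⊆ D := Set.subset_union_right
  have hreachS : ∀ a ∈ S, Reach H S u a := by
    intro a ha
    exact ⟨p.takeUntil a ha, fun z hz => SimpleGraph.Walk.support_takeUntil_subset _ _ hz⟩
  refine ⟨⟨u, hBD hu⟩, ?_, ?_⟩
  · -- connectivity
    have key : ∀ a ∈ D, Reach H D a u := by
      intro a ha
      rcases ha with ha | ha
      · exact (h.2.1 a ha u hu).mono hBD
      · exact ((hreachS a ha).mono hSD).symm
    intro x hx y hy
    exact (key x hx).trans (key y hy).symm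
  · -- no cut vertex
    intro w hw x hx y hy
    by_cases hwS : w ∈ S
    · by_cases hwB : w ∈ B
      · rcases hsup w hwS hwB with e | e
        · -- w = u ; anchor v
          rw [e] at hx hy ⊢
          have hvD : v ∈ D \ {u} := ⟨hBD hv, Ne.symm huv⟩
          have key : ∀ a ∈ D \ {u}, Reach H (D \ {u}) a v := by
            intro a ha
            by_cases haS : a ∈ S
            · have hau : a ≠ u := ha.2
              refine ⟨p.dropUntil a haS, ?_⟩
              intro z hz
              have hz1 : z ∈ S := SimpleGraph.Walk.support_dropUntil_subset _ _ hz
              have hz2 : z ≠ u := by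
                intro e; subst e
                exact path_start_not_mem_dropUntil hp haS hau hz
              exact ⟨hSD hz1, hz2⟩
            · have haB : a ∈ B := ha.1.resolve_right haS
              exact (h.reach_del ⟨haB, ha.2⟩ ⟨hv, Ne.symm huv⟩).mono
                (fun t ht => ⟨hBD ht.1, ht.2⟩)
          exact (key x hx).trans (key y hy).symm
        · -- w = v ; anchor u
          rw [e] at hx hy ⊢
          have huD : u ∈ D \ {v} := ⟨hBD hu, huv⟩
          have key : ∀ a ∈ D \ {v}, Reach H (D \ {v}) a u := by
            intro a ha
            by_cases haS : a ∈ S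
            · have hav : a ≠ v := ha.2
              refine Reach.symm ⟨p.takeUntil a haS, ?_⟩
              intro z hz
              have hz1 : z ∈ S := SimpleGraph.Walk.support_takeUntil_subset _ _ hz
              have hz2 : z ≠ v := by
                intro e; subst e
                exact path_end_not_mem_takeUntil hp haS hav hz
              exact ⟨hSD hz1, hz2⟩
            · have haB : a ∈ B := ha.1.resolve_right haS
              exact (h.reach_del ⟨haB, ha.2⟩ ⟨hu, huv⟩).mono
                (fun t ht => ⟨hBD ht.1, ht.2⟩)
          exact (key x hx).trans (key y hy).symm
      · -- w ∈ S \ B ; anchor u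
        have huw : u ≠ w := fun e => hwB (e ▸ hu)
        have hBsub : B ⊆ D \ {w} := fun t ht => ⟨hBD ht, fun e => hwB (e ▸ ht)⟩
        have huD : u ∈ D \ {w} := hBsub hu
        have key : ∀ a ∈ D \ {w}, Reach H (D \ {w}) a u := by
          intro a ha
          by_cases haB : a ∈ B
          · exact (h.2.1 a haB u hu).mono hBsub
          · have haS : a ∈ S := ha.1.resolve_left haB
            have haw : a ≠ w := ha.2
            rcases path_split hp hwS haS haw with ⟨q, hq1, hq2⟩ | ⟨q, hq1, hq2⟩
            · refine Reach.symm ⟨q, fun z hz => ⟨hSD (hq1 hz), ?_⟩⟩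
              intro e; subst e; exact hq2 hz
            · have r1 : Reach H (D \ {w}) a v := by
                refine ⟨q, fun z hz => ⟨hSD (hq1 hz), ?_⟩⟩
                intro e; subst e; exact hq2 hz
              exact r1.trans (((h.2.1 v hv u hu)).mono hBsub)
        exact (key x hx).trans (key y hy).symm
    · -- w ∉ S (so from D we know w ∈ B, but we only need w ∉ S)
      have hSsub : S ⊆ D \ {w} := fun t ht => ⟨hSD ht, fun e => hwS (e ▸ ht)⟩
      have huw : u ≠ w := fun e => hwS (e ▸ huS)
      have huD : u ∈ D \ {w} := ⟨hBD hu, huw⟩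
      have key : ∀ a ∈ D \ {w}, Reach H (D \ {w}) a u := by
        intro a ha
        by_cases haB : a ∈ B
        · exact (h.reach_del ⟨haB, ha.2⟩ ⟨hu, huw⟩).mono
            (fun t ht => ⟨hBD ht.1, ht.2⟩)
        · have haS : a ∈ S := ha.1.resolve_left haB
          exact ((hreachS a haS).mono hSsub).symm
      exact (key x hx).trans (key y hy).symm

lemma internal_vertex {p : H.Walk u v} (hne : u ≠ v)
    (hE : s(u, v) ∉ p.edges) : ∃ c ∈ p.support, c ≠ u ∧ c ≠ v := by
  cases p with
  | nil => exact absurd rfl hne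
  | @cons _ c _ h q =>
    by_cases hcv : c = v
    · subst hcv
      exact absurd (by simp) hE
    · exact ⟨c, by simp, fun e => h.ne e.symm, hcv⟩

/-- a block admits no handle -/
lemma block_no_handle (hB : SGIsBlock H B) (hu : u ∈ B) (hv : v ∈ B) (huv : u ≠ v)
    (W : H.Walk u v) (hsup : ∀ z ∈ W.support, z ∈ B → z = u ∨ z = v)
    (hedge : s(u, v) ∉ W.edges) : False := by
  set p : H.Walk u v := W.bypass with hpdef
  have hp : p.IsPath := W.bypass_isPath
  have hsupp : p.support ⊆ W.support := W.support_bypass_subset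
  have hedges : p.edges ⊆ W.edges := W.edges_bypass_subset
  have hE : s(u, v) ∉ p.edges := fun h => hedge (hedges h)
  obtain ⟨c, hc, hcu, hcv⟩ := internal_vertex huv hE
  have hcB : c ∉ B := by
    intro hcB
    rcases hsup c (hsupp hc) hcB with e | e
    · exact hcu e
    · exact hcv e
  have hns : NS H (B ∪ {z | z ∈ p.support}) :=
    ns_union_path ((sgNonseparable_iff_ns).1 hB.1) hu hv huv p hp
      (fun z hz hzB => hsup z (hsupp hz) hzB)
  have heq := hB.2 _ Set.subset_union_left ((sgNonseparable_iff_ns).2 hns)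
  have : c ∈ B := by
    rw [← heq]; exact Or.inr hc
  exact hcB this

end Ear

section EndBlock

/-- attachment vertices of a set -/
def att (H : SimpleGraph V) (B : Set V) : Set V :=
  {u | u ∈ B ∧ ∃ v, v ∉ B ∧ H.Adj u v}

/-- vertices outside `B` reachable from `y` avoiding `B \ {y}` -/
def cset (H : SimpleGraph V) (B : Set V) (y : V) : Set V :=
  {v | v ∉ B ∧ Reach H (Bᶜ ∪ {y}) y v}

lemma endblock_aux {H : SimpleGraph V} : ∀ (n : ℕ), ∀ (B : Set V) (y : V),
    SGIsBlock H B → 2 ≤ B.ncard → y ∈ att H B → (cset H B y).ncard ≤ n →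
    ∃ B', SGIsBlock H B' ∧ 2 ≤ B'.ncard ∧ ∃ x, att H B' ⊆ {x} := by
  intro n
  induction n using Nat.strong_induction_on with
  | _ n IH =>
  intro B y hB h2 hy hcn
  obtain ⟨hyB, y', hy'B, hadj⟩ := hy
  have hNSB : NS H B := (sgNonseparable_iff_ns).1 hB.1
  obtain ⟨B', hB', hsub⟩ := exists_block_superset (NS.pair hadj)
  have hyB' : y ∈ B' := hsub (by simp)
  have hy'B' : y' ∈ B' := hsub (by simp)
  have h2' : 2 ≤ B'.ncard := by
    have := Set.ncard_le_ncard hsub (Set.toFinite _)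
    rwa [Set.ncard_pair hadj.ne] at this
  have hNSB' : NS H B' := (sgNonseparable_iff_ns).1 hB'.1
  have claim1 : ∀ b, b ∈ B' → b ∈ B → b = y := by
    intro b hbB' hbB
    by_contra hne
    have hun : NS H (B ∪ B') :=
      NS.union hNSB hNSB' ⟨hyB, hyB'⟩ ⟨hbB, hbB'⟩ (fun e => hne e.symm)
    have heq := hB.2 (B ∪ B') Set.subset_union_left ((sgNonseparable_iff_ns).2 hun)
    have : y' ∈ B := heq ▸ (Or.inr hy'B' : y' ∈ B ∪ B')
    exact hy'B this
  have hy'y : y' ≠ y := fun e => hy'B (e ▸ hyB)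
  have claim2 : B' \ {y} ⊆ cset H B y := by
    intro w hw
    have hwB : w ∉ B := fun hwB => hw.2 (claim1 w hw.1 hwB)
    refine ⟨hwB, ?_⟩
    have r1 : Reach H (Bᶜ ∪ {y}) y y' :=
      Reach.of_adj hadj (Or.inr rfl) (Or.inl hy'B)
    have hsubB' : B' \ {y} ⊆ (Bᶜ ∪ {y} : Set V) := by
      intro t ht
      by_cases htB : t ∈ B
      · exact absurd (claim1 t ht.1 htB) ht.2
      · exact Or.inl htB
    have r2 : Reach H (B' \ {y}) y' w :=
      hNSB'.reach_del ⟨hy'B', hy'y⟩ ⟨hw.1, hw.2⟩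
    exact r1.trans (r2.mono hsubB')
  by_cases hend : ∃ x, att H B' ⊆ {x}
  · exact ⟨B', hB', h2', hend⟩
  · obtain ⟨z, hz, hzy⟩ := Set.not_subset.1 ((not_exists.1 hend) y)
    have hzy' : z ≠ y := fun e => hzy (by simp [e])
    have hzB' : z ∈ B' := hz.1
    have hzC : z ∈ cset H B y := claim2 ⟨hzB', hzy'⟩
    have hyW' : y ∉ (B'ᶜ ∪ {z} : Set V) := by
      rintro (h | h)
      · exact h hyB'
      · exact hzy' h.symm
    have claim3 : cset H B' z ⊆ cset H B y \ {z} := by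
      rintro v ⟨hvB', W, hW⟩
      obtain ⟨P, hP⟩ := hzC.2
      have hsuppWB : ∀ s ∈ W.support, s ∉ B := by
        by_contra hcon
        push_neg at hcon
        obtain ⟨s, hsW, hsB⟩ := hcon
        obtain ⟨b₀, hb₀B, q, hq1, hq2⟩ := first_hit (S := B) (W.takeUntil s hsW) hsB
        have hq1' : q.support ⊆ W.support :=
          List.Subset.trans hq1 (SimpleGraph.Walk.support_takeUntil_subset _ _)
        have hb₀y : b₀ ≠ y := by
          intro e
          have : b₀ ∈ W.support := hq1' q.end_mem_support
          exact hyW' (e ▸ hW _ this)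
        set Q := P.append q with hQ
        have hQsup : ∀ t ∈ Q.support, t ∈ B → t = y ∨ t = b₀ := by
          intro t ht htB
          rcases (SimpleGraph.Walk.mem_support_append_iff _ _).1 ht with h | h
          · rcases hP t h with h1 | h1
            · exact absurd htB h1
            · exact Or.inl h1
          · by_cases htb : t = b₀
            · exact Or.inr htb
            · exact absurd htB (hq2 t h htb)
        have hQedge : s(y, b₀) ∉ Q.edges := by
          intro he
          rw [SimpleGraph.Walk.edges_append, List.mem_append] at he
          rcases he with he | he
          · have : b₀ ∈ P.support := SimpleGraph.Walk.snd_mem_support_of_mem_edges _ he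
            rcases hP _ this with h1 | h1
            · exact h1 hb₀B
            · exact hb₀y h1
          · have : y ∈ q.support := SimpleGraph.Walk.fst_mem_support_of_mem_edges _ he
            exact hyW' (hW _ (hq1' this))
        exact block_no_handle hB hyB hb₀B (fun e => hb₀y e.symm) Q hQsup hQedge
      have hvB : v ∉ B := hsuppWB v W.end_mem_support
      refine ⟨⟨hvB, ?_⟩, ?_⟩
      · exact hzC.2.trans ⟨W, fun t ht => Or.inl (hsuppWB t ht)⟩
      · intro e
        exact hvB' ((e : v = z) ▸ hzB')
    have hlt : (cset H B' z).ncard < n := by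
      have h1 : (cset H B' z).ncard ≤ (cset H B y \ {z}).ncard :=
        Set.ncard_le_ncard claim3 (Set.toFinite _)
      have h2 : (cset H B y \ {z}).ncard < (cset H B y).ncard :=
        Set.ncard_diff_singleton_lt_of_mem hzC (Set.toFinite _)
      omega
    exact IH _ hlt B' z hB' h2' hz le_rfl

lemma exists_endblock {H : SimpleGraph V} (hE : ∃ u v, H.Adj u v) :
    ∃ B, SGIsBlock H B ∧ 2 ≤ B.ncard ∧ ∃ x, att H B ⊆ {x} := by
  obtain ⟨u, v, huv⟩ := hE
  obtain ⟨B, hB, hsub⟩ := exists_block_superset (NS.pair huv)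
  have h2 : 2 ≤ B.ncard := by
    have := Set.ncard_le_ncard hsub (Set.toFinite _)
    rwa [Set.ncard_pair huv.ne] at this
  by_cases hend : ∃ x, att H B ⊆ {x}
  · exact ⟨B, hB, h2, hend⟩
  · obtain ⟨y, hy, _⟩ := Set.not_subset.1 ((not_exists.1 hend) u)
    exact endblock_aux _ B y hB h2 hy le_rfl

end EndBlock

section RG

/-- restriction of a graph to a vertex set, as a graph on the same vertex type -/
def rg (T : SimpleGraph V) (A : Set V) : SimpleGraph V where
  Adj u v := T.Adj u v ∧ u ∈ A ∧ v ∈ A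
  symm := ⟨by rintro u v ⟨h, ha, hb⟩; exact ⟨h.symm, hb, ha⟩⟩
  loopless := ⟨by rintro v ⟨h, _⟩; exact T.loopless.irrefl v h⟩

variable {T : SimpleGraph V} {A B : Set V}

lemma reach_rg_iff {X : Set V} (hXA : X ⊆ A) {a b : V} :
    Reach (rg T A) X a b ↔ Reach T X a b := by
  constructor
  · exact Reach.congr (fun u v _ _ h => h.1)
  · exact Reach.congr (fun u v hu hv h => ⟨h, hXA hu, hXA hv⟩)

lemma ns_rg_iff (hBA : B ⊆ A) : NS (rg T A) B ↔ NS T B := by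
  unfold NS
  have hd : ∀ v, B \ {v} ⊆ A := fun v => (Set.diff_subset).trans hBA
  constructor
  · rintro ⟨h1, h2, h3⟩
    exact ⟨h1, fun a ha b hb => (reach_rg_iff hBA).1 (h2 a ha b hb),
      fun v hv a ha b hb => (reach_rg_iff (hd v)).1 (h3 v hv a ha b hb)⟩
  · rintro ⟨h1, h2, h3⟩
    exact ⟨h1, fun a ha b hb => (reach_rg_iff hBA).2 (h2 a ha b hb),
      fun v hv a ha b hb => (reach_rg_iff (hd v)).2 (h3 v hv a ha b hb)⟩

lemma ns_rg_subset (h : NS (rg T A) B) (h2 : 2 ≤ B.ncard) : B ⊆ A := by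
  intro u hu
  have h1 : 1 < B.ncard := by omega
  obtain ⟨b, hb, hbu⟩ := Set.exists_ne_of_one_lt_ncard h1 u
  obtain ⟨p, _⟩ := h.2.1 u hu b hb
  cases p with
  | nil => exact absurd rfl hbu
  | cons h' _ => exact h'.2.1

/-- Structure of blocks of the restricted graph via the GDP hypothesis on `T`. -/
lemma block_structure
    (hGDP : ∀ B : Set V, SGIsBlock T B →
      (∀ u ∈ B, ∀ v ∈ B, u ≠ v → T.Adj u v) ∨ IsCycleGraph (T.induce B))
    (hblk : SGIsBlock (rg T A) B) (h2 : 2 ≤ B.ncard) :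
    B ⊆ A ∧ ((∀ u ∈ B, ∀ v ∈ B, u ≠ v → T.Adj u v) ∨ IsCycleGraph (T.induce B)) := by
  have hNS' : NS (rg T A) B := (sgNonseparable_iff_ns).1 hblk.1
  have hBA : B ⊆ A := ns_rg_subset hNS' h2
  have hNS : NS T B := (ns_rg_iff hBA).1 hNS'
  refine ⟨hBA, ?_⟩
  obtain ⟨Bh, hBh, hsub⟩ := exists_block_superset hNS
  rcases hGDP Bh hBh with hclq | hcyc
  · exact Or.inl (fun u hu v hv hne => hclq u (hsub hu) v (hsub hv) hne)
  · by_cases heq : B = Bh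
    · exact Or.inr (heq ▸ hcyc)
    · -- proper subset of a cycle block: B has exactly two (adjacent) vertices
      left
      have hdeg : ∀ v (hv : v ∈ Bh), ({u | u ∈ Bh ∧ T.Adj v u}).ncard = 2 := by
        intro v hv
        have h0 := hcyc.2 ⟨v, hv⟩
        have himg : (Subtype.val '' {u : ↥Bh | (T.induce Bh).Adj ⟨v, hv⟩ u}) =
            {u | u ∈ Bh ∧ T.Adj v u} := by
          ext t
          constructor
          · rintro ⟨⟨t', ht'⟩, hadj, rfl⟩
            exact ⟨ht', hadj⟩
          · rintro ⟨htB, hadj⟩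
            exact ⟨⟨t, htB⟩, hadj, rfl⟩
        rw [← himg, Set.ncard_image_of_injective _ Subtype.val_injective]
        exact h0
      have hne3 : ¬ 3 ≤ B.ncard := by
        intro h3
        have hclosed : ∀ v ∈ B, ∀ u, u ∈ Bh → T.Adj v u → u ∈ B := by
          intro v hv u huBh hadj
          obtain ⟨x, y, hx, hy, hxy, hax, hay⟩ := ns_two_nbrs hNS h3 hv
          have hsub2 : ({x, y} : Set V) ⊆ {u | u ∈ Bh ∧ T.Adj v u} := by
            rintro t (rfl | rfl)
            · exact ⟨hsub hx, hax⟩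
            · exact ⟨hsub hy, hay⟩
          have heq2 : ({x, y} : Set V) = {u | u ∈ Bh ∧ T.Adj v u} := by
            apply Set.eq_of_subset_of_ncard_le hsub2 _ (Set.toFinite _)
            rw [hdeg v (hsub hv), Set.ncard_pair hxy]
          have hu2 : u ∈ ({x, y} : Set V) := by
            rw [heq2]; exact ⟨huBh, hadj⟩
          rcases hu2 with rfl | rfl
          · exact hx
          · exact hy
        obtain ⟨b₀, hb₀⟩ := hNS.1
        obtain ⟨t, htBh, htB⟩ : ∃ t, t ∈ Bh ∧ t ∉ B := by
          by_contra hcon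
          push_neg at hcon
          exact heq (Set.Subset.antisymm hsub (fun t ht => hcon t ht))
        have hreach : Reach T Bh b₀ t := by
          have hpre := hcyc.1.preconnected
          exact (preconnected_induce_iff).1 hpre b₀ (hsub hb₀) t htBh
        obtain ⟨p, hp⟩ := hreach
        have hwalkcl : ∀ {c d : V} (q : T.Walk c d), (∀ z ∈ q.support, z ∈ Bh) →
            c ∈ B → d ∈ B := by
          intro c d q
          induction q with
          | nil => exact fun _ h => h
          | @cons c w d h q ih =>
            intro hsup hc
            have hwBh : w ∈ Bh := hsup _ (by simp)
            exact ih (fun z hz => hsup _ (by simp [hz])) (hclosed c hc w hwBh h)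
        exact htB (hwalkcl p hp hb₀)
      have h2e : B.ncard = 2 := by omega
      intro u hu v hv hne
      have hBuv : ({u, v} : Set V) = B := by
        apply Set.eq_of_subset_of_ncard_le _ _ (Set.toFinite _)
        · rintro t (rfl | rfl)
          · exact hu
          · exact hv
        · rw [h2e, Set.ncard_pair hne]
      obtain ⟨q, hq⟩ := hNS.2.1 u hu v hv
      cases q with
      | nil => exact absurd rfl hne
      | @cons _ w _ h' q' =>
        have hwB : w ∈ B := hq _ (by simp)
        have hw2 : w ∈ ({u, v} : Set V) := hBuv ▸ hwB
        rcases hw2 with rfl | rfl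
        · exact absurd rfl h'.ne
        · exact h'

end RG

section Counting

variable {T : SimpleGraph V} {A B : Set V}

lemma deg_eq_ncard (G : SimpleGraph V) (v : V) :
    G.degree v = (G.neighborSet v).ncard := by
  rw [Set.ncard_eq_toFinset_card', ← SimpleGraph.neighborFinset_def]
  rfl

lemma rg_degree_zero {v : V} (hv : v ∉ B) : (rg T B).degree v = 0 := by
  rw [SimpleGraph.degree, Finset.card_eq_zero, Finset.eq_empty_iff_forall_notMem]
  intro w hw
  rw [SimpleGraph.mem_neighborFinset] at hw
  exact hv hw.2.1

lemma rg_sum_deg :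
    ∑ v ∈ B.toFinset, (rg T B).degree v = 2 * (rg T B).edgeFinset.card := by
  rw [← SimpleGraph.sum_degrees_eq_twice_card_edges]
  apply Finset.sum_subset (Finset.subset_univ _)
  intro v _ hv
  exact rg_degree_zero (fun h => hv (Set.mem_toFinset.2 h))

lemma inner_le_general : 2 * (rg T B).edgeFinset.card ≤ B.ncard * (B.ncard - 1) := by
  rw [← rg_sum_deg]
  have hcard : B.toFinset.card = B.ncard := (Set.ncard_eq_toFinset_card' B).symm
  calc ∑ v ∈ B.toFinset, (rg T B).degree v
      ≤ ∑ _v ∈ B.toFinset, (B.ncard - 1) := by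
        apply Finset.sum_le_sum
        intro v hv
        have : (rg T B).neighborFinset v ⊆ B.toFinset.erase v := by
          intro w hw
          rw [SimpleGraph.mem_neighborFinset] at hw
          exact Finset.mem_erase.2 ⟨fun e => (rg T B).loopless.irrefl v (e ▸ hw), Set.mem_toFinset.2 hw.2.2⟩
        calc (rg T B).degree v ≤ (B.toFinset.erase v).card := Finset.card_le_card this
          _ ≤ B.ncard - 1 := by
              rw [Finset.card_erase_of_mem hv, hcard]
    _ = B.ncard * (B.ncard - 1) := by rw [Finset.sum_const, hcard, smul_eq_mul]

lemma cycle_nbr_ncard (hcyc : IsCycleGraph (T.induce B)) {v : V} (hv : v ∈ B) :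
    ({u | u ∈ B ∧ T.Adj v u}).ncard = 2 := by
  have h0 := hcyc.2 ⟨v, hv⟩
  have himg : (Subtype.val '' {u : ↥B | (T.induce B).Adj ⟨v, hv⟩ u}) =
      {u | u ∈ B ∧ T.Adj v u} := by
    ext t
    constructor
    · rintro ⟨⟨t', ht'⟩, hadj, rfl⟩
      exact ⟨ht', hadj⟩
    · rintro ⟨htB, hadj⟩
      exact ⟨⟨t, htB⟩, hadj, rfl⟩
  rw [← himg, Set.ncard_image_of_injective _ Subtype.val_injective]
  exact h0

lemma cycle_deg_two (hcyc : IsCycleGraph (T.induce B)) {v : V} (hv : v ∈ B) :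
    (rg T B).degree v = 2 := by
  rw [deg_eq_ncard]
  have : (rg T B).neighborSet v = {u | u ∈ B ∧ T.Adj v u} := by
    ext u
    constructor
    · rintro ⟨h, _, hu⟩; exact ⟨hu, h⟩
    · rintro ⟨hu, h⟩; exact ⟨h, hv, hu⟩
  rw [this]
  exact cycle_nbr_ncard hcyc hv

lemma inner_cycle (hcyc : IsCycleGraph (T.induce B)) :
    (rg T B).edgeFinset.card = B.ncard := by
  have h := rg_sum_deg (T := T) (B := B)
  have hsum : ∑ v ∈ B.toFinset, (rg T B).degree v = 2 * B.ncard := by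
    rw [Finset.sum_congr rfl (fun v hv => cycle_deg_two hcyc (Set.mem_toFinset.1 hv)),
      Finset.sum_const, smul_eq_mul, ← Set.ncard_eq_toFinset_card' B, mul_comm]
  omega

lemma cycle_ncard_ge_three (hcyc : IsCycleGraph (T.induce B)) (hne : B.Nonempty) :
    3 ≤ B.ncard := by
  obtain ⟨v, hv⟩ := hne
  have h2 := cycle_nbr_ncard hcyc hv
  have hsub : {u | u ∈ B ∧ T.Adj v u} ⊆ B \ {v} := by
    rintro u ⟨hu, hadj⟩
    exact ⟨hu, fun e => T.loopless.irrefl v ((e : u = v) ▸ hadj)⟩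
  have := Set.ncard_le_ncard hsub (Set.toFinite _)
  rw [h2, Set.ncard_diff_singleton_of_mem hv] at this
  have hvpos : 0 < B.ncard := (Set.ncard_pos (Set.toFinite _)).2 ⟨v, hv⟩
  omega

lemma cycle_three_clique (hcyc : IsCycleGraph (T.induce B)) (h3 : B.ncard = 3) :
    ∀ u ∈ B, ∀ v ∈ B, u ≠ v → T.Adj u v := by
  intro u hu v hv hne
  have h2 := cycle_nbr_ncard hcyc hu
  have hsub : {w | w ∈ B ∧ T.Adj u w} ⊆ B \ {u} := by
    rintro w ⟨hw, hadj⟩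
    exact ⟨hw, fun e => T.loopless.irrefl u ((e : w = u) ▸ hadj)⟩
  have hdcard : (B \ {u}).ncard = 2 := by
    rw [Set.ncard_diff_singleton_of_mem hu, h3]
  have heq : {w | w ∈ B ∧ T.Adj u w} = B \ {u} :=
    Set.eq_of_subset_of_ncard_le hsub (by rw [h2, hdcard]) (Set.toFinite _)
  have : v ∈ {w | w ∈ B ∧ T.Adj u w} := heq ▸ (⟨hv, hne.symm⟩ : v ∈ B \ {u})
  exact this.2

/-- main decomposition of the edge count when deleting `D ⊆ B` -/
lemma count_removed (D : Set V) (hDB : D ⊆ B) (hBA : B ⊆ A) (x : V)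
    (hall : ∀ d ∈ D, ∀ w, (rg T A).Adj d w → w ∈ B ∨ d = x) :
    (rg T A).edgeFinset.card ≤ (rg T (A \ D)).edgeFinset.card
      + (rg T B).edgeFinset.card
      + ({w | w ∉ B ∧ (rg T A).Adj x w ∧ x ∈ D}).ncard := by
  classical
  set OutS : Set V := {w | w ∉ B ∧ (rg T A).Adj x w ∧ x ∈ D} with hOutS
  set Out : Finset V := OutS.toFinset with hOut
  have hOutcard : Out.card = OutS.ncard := (Set.ncard_eq_toFinset_card' OutS).symm
  set M : Finset (Sym2 V) := (rg T A).edgeFinset.filter (fun e => ∃ z ∈ D, z ∈ e) with hM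
  have step1 : (rg T A).edgeFinset ⊆ (rg T (A \ D)).edgeFinset ∪ M := by
    intro e he
    by_cases hMm : ∃ z ∈ D, z ∈ e
    · exact Finset.mem_union_right _ (Finset.mem_filter.2 ⟨he, hMm⟩)
    · apply Finset.mem_union_left
      rw [SimpleGraph.mem_edgeFinset] at he ⊢
      revert he hMm
      induction e using Sym2.ind with
      | _ u v =>
        intro he hMm
        rw [SimpleGraph.mem_edgeSet] at he ⊢
        push_neg at hMm
        refine ⟨he.1, ⟨he.2.1, ?_⟩, ⟨he.2.2, ?_⟩⟩
        · exact fun h => hMm u h (by simp)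
        · exact fun h => hMm v h (by simp)
  have claim : ∀ u v : V, (rg T A).Adj u v → u ∈ D →
      s(u, v) ∈ (rg T B).edgeFinset ∪ Out.image (fun w => s(x, w)) := by
    intro u v hadj hu
    by_cases hvB : v ∈ B
    · apply Finset.mem_union_left
      rw [SimpleGraph.mem_edgeFinset, SimpleGraph.mem_edgeSet]
      exact ⟨hadj.1, hDB hu, hvB⟩
    · rcases hall u hu v hadj with h | rfl
      · exact absurd h hvB
      · apply Finset.mem_union_right
        apply Finset.mem_image.2
        exact ⟨v, Set.mem_toFinset.2 ⟨hvB, hadj, hu⟩, rfl⟩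
  have step2 : M ⊆ (rg T B).edgeFinset ∪ Out.image (fun w => s(x, w)) := by
    intro e he
    rw [hM, Finset.mem_filter, SimpleGraph.mem_edgeFinset] at he
    obtain ⟨he1, z, hz, hze⟩ := he
    revert he1 hze
    induction e using Sym2.ind with
    | _ u v =>
      intro he1 hze
      rw [SimpleGraph.mem_edgeSet] at he1
      rw [Sym2.mem_iff] at hze
      rcases hze with rfl | rfl
      · exact claim _ _ he1 hz
      · rw [Sym2.eq_swap]
        exact claim _ _ he1.symm hz
  have himg := Finset.card_image_le (s := Out) (f := fun w => s(x, w))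
  calc (rg T A).edgeFinset.card
      ≤ ((rg T (A \ D)).edgeFinset ∪ M).card := Finset.card_le_card step1
    _ ≤ (rg T (A \ D)).edgeFinset.card + M.card := Finset.card_union_le _ _
    _ ≤ (rg T (A \ D)).edgeFinset.card + ((rg T B).edgeFinset ∪ Out.image (fun w => s(x, w))).card := by
        exact Nat.add_le_add_left (Finset.card_le_card step2) _
    _ ≤ (rg T (A \ D)).edgeFinset.card + ((rg T B).edgeFinset.card + (Out.image (fun w => s(x, w))).card) := by
        exact Nat.add_le_add_left (Finset.card_union_le _ _) _
    _ ≤ _ := by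
        rw [← hOutcard]
        omega

end Counting

section Arith

lemma arith_poly1 {k m e : ℝ} (hm2 : 2 ≤ m) (hmk : m ≤ k - 2) (hk1 : 0 < k - 1)
    (he : 2 * e ≤ m * (m - 1)) : 2 * (e + 0) ≤ (k - 2 + 2 / (k - 1)) * (m - 1) := by
  have hdiv : (0:ℝ) < 2 / (k - 1) := by positivity
  nlinarith [mul_nonneg (by linarith : (0:ℝ) ≤ k - 2 - m) (by linarith : (0:ℝ) ≤ m - 1),
    mul_nonneg hdiv.le (by linarith : (0:ℝ) ≤ m - 1)]

lemma arith_poly2 {k m e o : ℝ} (hk1 : 0 < k - 1) (hm : m = k - 1)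
    (he : 2 * e ≤ m * (m - 1)) (ho : o ≤ 1) :
    2 * (e + o) ≤ (k - 2 + 2 / (k - 1)) * m := by
  have hexp : (k - 2 + 2 / (k - 1)) * m = (k - 2) * (k - 1) + 2 := by
    rw [hm]; field_simp
  rw [hexp]
  nlinarith [he, ho, hm]

lemma arith_poly3 {k m o : ℝ} (hk : 4 ≤ k) (hm : 4 ≤ m) (ho : o = 0) :
    2 * (m + o) ≤ (k - 2 + 2 / (k - 1)) * (m - 1) := by
  have hk1 : (0:ℝ) < k - 1 := by linarith
  have hq : (k - 2 + 2 / (k - 1)) = ((k - 2) * (k - 1) + 2) / (k - 1) := by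
    field_simp
  rw [ho, hq, div_mul_eq_mul_div, le_div_iff₀ hk1]
  have hs : (0:ℝ) ≤ k - 4 := by linarith
  have ht : (0:ℝ) ≤ m - 4 := by linarith
  nlinarith [mul_nonneg hs ht, mul_nonneg (mul_nonneg hs hs) ht, mul_nonneg hs hs,
    mul_nonneg (mul_nonneg hs ht) hs]

end Arith

section Main

variable {T : SimpleGraph V}

lemma clique_card_le {B : Set V} {k : ℕ} (hfree : T.CliqueFree k)
    (hclq : ∀ u ∈ B, ∀ v ∈ B, u ≠ v → T.Adj u v) : B.ncard ≤ k - 1 := by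
  by_contra hcon
  push_neg at hcon
  have hcard : k ≤ B.toFinset.card := by
    rw [← Set.ncard_eq_toFinset_card']; omega
  obtain ⟨S, hSsub, hScard⟩ := Finset.exists_subset_card_eq hcard
  refine hfree S ?_
  rw [SimpleGraph.isNClique_iff]
  refine ⟨?_, hScard⟩
  intro a ha b hb hne
  exact hclq a (Set.mem_toFinset.1 (hSsub ha)) b (Set.mem_toFinset.1 (hSsub hb)) hne

lemma out_ncard_le_one {A B D : Set V} {x : V} {k : ℕ} (hk : 4 ≤ k)
    (hΔ : ∀ v : V, {u | T.Adj v u}.ncard ≤ k - 1)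
    (hclq : ∀ u ∈ B, ∀ v ∈ B, u ≠ v → T.Adj u v)
    (hm : B.ncard = k - 1) (hxB : x ∈ B) :
    ({w | w ∉ B ∧ (rg T A).Adj x w ∧ x ∈ D}).ncard ≤ 1 := by
  by_contra hcon
  push_neg at hcon
  obtain ⟨a, b, ha, hb, hab⟩ := (Set.one_lt_ncard_iff (Set.toFinite _)).1 hcon
  obtain ⟨haB, haadj, -⟩ := ha
  obtain ⟨hbB, hbadj, -⟩ := hb
  have hBt : B.toFinset.card = k - 1 := by rw [← Set.ncard_eq_toFinset_card']; exact hm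
  have hbnotin : b ∉ B.toFinset.erase x :=
    fun h => hbB (Set.mem_toFinset.1 (Finset.mem_of_mem_erase h))
  have hanotin : a ∉ insert b (B.toFinset.erase x) := by
    rw [Finset.mem_insert]
    rintro (rfl | h)
    · exact hab rfl
    · exact haB (Set.mem_toFinset.1 (Finset.mem_of_mem_erase h))
  have hScard : (insert a (insert b (B.toFinset.erase x))).card = k := by
    rw [Finset.card_insert_of_notMem hanotin, Finset.card_insert_of_notMem hbnotin,
      Finset.card_erase_of_mem (Set.mem_toFinset.2 hxB), hBt]
    omega
  have hSsub : insert a (insert b (B.toFinset.erase x)) ⊆ T.neighborFinset x := by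
    intro t ht
    rw [SimpleGraph.mem_neighborFinset]
    rcases Finset.mem_insert.1 ht with rfl | ht
    · exact haadj.1
    rcases Finset.mem_insert.1 ht with rfl | ht
    · exact hbadj.1
    · have h := Finset.mem_erase.1 ht
      exact hclq x hxB t (Set.mem_toFinset.1 h.2) (fun e => h.1 e.symm)
  have hcard := Finset.card_le_card hSsub
  have hdeg : (T.neighborFinset x).card ≤ k - 1 := by
    have h := hΔ x
    have heq : (T.neighborFinset x).card = (T.neighborSet x).ncard := (deg_eq_ncard T x) ▸ rfl
    rw [heq]
    exact h
  omega

lemma main_bound {k : ℕ} (hk : 4 ≤ k)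
    (hGDP : ∀ B : Set V, SGIsBlock T B →
      (∀ u ∈ B, ∀ v ∈ B, u ≠ v → T.Adj u v) ∨ IsCycleGraph (T.induce B))
    (hΔ : ∀ v : V, {u | T.Adj v u}.ncard ≤ k - 1)
    (hfree : T.CliqueFree k) :
    ∀ (n : ℕ) (A : Set V), A.ncard ≤ n →
      2 * ((rg T A).edgeFinset.card : ℝ) ≤
        ((k : ℝ) - 2 + 2 / ((k : ℝ) - 1)) * (A.ncard : ℝ) := by
  have hkR : (4 : ℝ) ≤ (k : ℝ) := by exact_mod_cast hk
  have hk1 : (0 : ℝ) < (k : ℝ) - 1 := by linarith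
  have hdivpos : (0 : ℝ) < 2 / ((k : ℝ) - 1) := by positivity
  have hcoeffpos : (0:ℝ) < (k : ℝ) - 2 + 2 / ((k : ℝ) - 1) := by linarith
  intro n
  induction n using Nat.strong_induction_on with
  | _ n IH =>
  intro A hA
  by_cases hE : ∃ u w, (rg T A).Adj u w
  swap
  · have hempty : (rg T A).edgeFinset = ∅ := by
      rw [Finset.eq_empty_iff_forall_notMem]
      intro e he
      rw [SimpleGraph.mem_edgeFinset] at he
      revert he
      induction e using Sym2.ind with
      | _ u w =>
        intro he
        rw [SimpleGraph.mem_edgeSet] at he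
        exact hE ⟨u, w, he⟩
    rw [hempty]
    simp only [Finset.card_empty, Nat.cast_zero, mul_zero]
    exact mul_nonneg (le_of_lt hcoeffpos) (Nat.cast_nonneg _)
  · obtain ⟨B, hblk, h2, x0, hx0⟩ := exists_endblock hE
    obtain ⟨hBA, hstruct⟩ := block_structure hGDP hblk h2
    obtain ⟨x, hxB, hxatt⟩ : ∃ x, x ∈ B ∧ att (rg T A) B ⊆ {x} := by
      by_cases hA0 : (att (rg T A) B).Nonempty
      · obtain ⟨a, ha⟩ := hA0
        refine ⟨a, ha.1, ?_⟩
        intro t ht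
        have h1 : t = x0 := hx0 ht
        have h2' : a = x0 := hx0 ha
        rw [h1, ← h2']
        rfl
      · obtain ⟨b, hb⟩ := ((sgNonseparable_iff_ns).1 hblk.1).1
        exact ⟨b, hb, fun t ht => absurd ⟨t, ht⟩ hA0⟩
    have hnonatt : ∀ d ∈ B, d ≠ x → ∀ w, (rg T A).Adj d w → w ∈ B := by
      intro d hd hdx w hw
      by_contra hwB
      exact hdx (hxatt ⟨hd, w, hwB, hw⟩)
    have hstruct2 : (∀ u ∈ B, ∀ v ∈ B, u ≠ v → T.Adj u v) ∨
        (IsCycleGraph (T.induce B) ∧ 4 ≤ B.ncard) := by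
      rcases hstruct with h | h
      · exact Or.inl h
      · have h3 := cycle_ncard_ge_three h ⟨x, hxB⟩
        by_cases h4 : 4 ≤ B.ncard
        · exact Or.inr ⟨h, h4⟩
        · exact Or.inl (cycle_three_clique h (by omega))
    have hrec : ∀ (D : Set V), D ⊆ A → D.Nonempty →
        2 * ((rg T (A \ D)).edgeFinset.card : ℝ) ≤
          ((k : ℝ) - 2 + 2 / ((k : ℝ) - 1)) * ((A \ D).ncard : ℝ) := by
      intro D hDA hDne
      have h1 : (A \ D).ncard = A.ncard - D.ncard := Set.ncard_diff hDA
      have h2' : 0 < D.ncard := (Set.ncard_pos (Set.toFinite _)).2 hDne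
      have h3 : D.ncard ≤ A.ncard := Set.ncard_le_ncard hDA (Set.toFinite A)
      have hlt : (A \ D).ncard < n := by omega
      exact IH _ hlt _ le_rfl
    have key : ∀ (D : Set V), D ⊆ B → D.Nonempty →
        (∀ d ∈ D, ∀ w, (rg T A).Adj d w → w ∈ B ∨ d = x) →
        2 * (((rg T B).edgeFinset.card : ℝ)
            + (({w | w ∉ B ∧ (rg T A).Adj x w ∧ x ∈ D}).ncard : ℝ))
          ≤ ((k : ℝ) - 2 + 2 / ((k : ℝ) - 1)) * (D.ncard : ℝ) →
        2 * ((rg T A).edgeFinset.card : ℝ) ≤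
          ((k : ℝ) - 2 + 2 / ((k : ℝ) - 1)) * (A.ncard : ℝ) := by
      intro D hDB hDne hall hbound
      have hDA : D ⊆ A := hDB.trans hBA
      have hcount := count_removed (T := T) (A := A) D hDB hBA x hall
      have hrec' := hrec D hDA hDne
      have h1 : (A \ D).ncard = A.ncard - D.ncard := Set.ncard_diff hDA
      have h3 : D.ncard ≤ A.ncard := Set.ncard_le_ncard hDA (Set.toFinite A)
      have hcast : ((A \ D).ncard : ℝ) = (A.ncard : ℝ) - (D.ncard : ℝ) := by
        rw [h1, Nat.cast_sub h3]
      have hcR := (Nat.cast_le (α := ℝ)).2 hcount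
      push_cast at hcR
      rw [hcast] at hrec'
      linarith
    have hm2R : (2 : ℝ) ≤ (B.ncard : ℝ) := by exact_mod_cast h2
    rcases hstruct2 with hclq | ⟨hcyc, h4⟩
    · -- clique case
      have hmk : B.ncard ≤ k - 1 := clique_card_le hfree hclq
      have hinner : 2 * (rg T B).edgeFinset.card ≤ B.ncard * (B.ncard - 1) :=
        inner_le_general
      have hinR : 2 * ((rg T B).edgeFinset.card : ℝ) ≤ (B.ncard : ℝ) * ((B.ncard : ℝ) - 1) := by
        have h'' := (Nat.cast_le (α := ℝ)).2 hinner
        push_cast [Nat.cast_sub (by omega : 1 ≤ B.ncard)] at h''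
        linarith
      by_cases hm1 : B.ncard ≤ k - 2
      · -- delete B \ {x}
        refine key (B \ {x}) Set.diff_subset ?_ ?_ ?_
        · obtain ⟨b, hb, hbx⟩ := Set.exists_ne_of_one_lt_ncard (by omega : 1 < B.ncard) x
          exact ⟨b, hb, hbx⟩
        · exact fun d hd w hw => Or.inl (hnonatt d hd.1 hd.2 w hw)
        · have hout : ({w | w ∉ B ∧ (rg T A).Adj x w ∧ x ∈ B \ {x}}).ncard = 0 := by
            rw [Set.ncard_eq_zero (Set.toFinite _)]
            exact Set.eq_empty_iff_forall_notMem.2 (fun w hw => hw.2.2.2 rfl)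
          have hDcard : (B \ {x}).ncard = B.ncard - 1 :=
            Set.ncard_diff_singleton_of_mem hxB
          have hDcR : (((B \ {x}).ncard : ℕ) : ℝ) = (B.ncard : ℝ) - 1 := by
            rw [hDcard, Nat.cast_sub (by omega : 1 ≤ B.ncard), Nat.cast_one]
          rw [hout, Nat.cast_zero, hDcR]
          have hmkR : (B.ncard : ℝ) ≤ (k : ℝ) - 2 := by
            have h' : B.ncard + 2 ≤ k := by omega
            have h'' := (Nat.cast_le (α := ℝ)).2 h'
            push_cast at h''
            linarith
          exact arith_poly1 hm2R hmkR hk1 hinR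
      · -- B.ncard = k - 1, delete all of B
        have hmeq : B.ncard = k - 1 := by omega
        refine key B le_rfl ⟨x, hxB⟩ ?_ ?_
        · intro d hd w hw
          by_cases hdx : d = x
          · exact Or.inr hdx
          · exact Or.inl (hnonatt d hd hdx w hw)
        · have hout := out_ncard_le_one (T := T) (A := A) (D := B) hk hΔ hclq hmeq hxB
          have houtR : (({w | w ∉ B ∧ (rg T A).Adj x w ∧ x ∈ B}).ncard : ℝ) ≤ 1 := by
            exact_mod_cast hout
          have hmRR : ((B.ncard : ℕ) : ℝ) = (k : ℝ) - 1 := by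
            rw [hmeq, Nat.cast_sub (by omega : 1 ≤ k), Nat.cast_one]
          exact arith_poly2 hk1 hmRR hinR houtR
    · -- cycle case
      have hinner : (rg T B).edgeFinset.card = B.ncard := inner_cycle hcyc
      refine key (B \ {x}) Set.diff_subset ?_ ?_ ?_
      · obtain ⟨b, hb, hbx⟩ := Set.exists_ne_of_one_lt_ncard (by omega : 1 < B.ncard) x
        exact ⟨b, hb, hbx⟩
      · exact fun d hd w hw => Or.inl (hnonatt d hd.1 hd.2 w hw)
      · have hout : ({w | w ∉ B ∧ (rg T A).Adj x w ∧ x ∈ B \ {x}}).ncard = 0 := by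
          rw [Set.ncard_eq_zero (Set.toFinite _)]
          exact Set.eq_empty_iff_forall_notMem.2 (fun w hw => hw.2.2.2 rfl)
        have hDcard : (B \ {x}).ncard = B.ncard - 1 :=
          Set.ncard_diff_singleton_of_mem hxB
        have hDcR : (((B \ {x}).ncard : ℕ) : ℝ) = (B.ncard : ℝ) - 1 := by
          rw [hDcard, Nat.cast_sub (by omega : 1 ≤ B.ncard), Nat.cast_one]
        have hinnerR : ((rg T B).edgeFinset.card : ℝ) = (B.ncard : ℝ) := by
          exact_mod_cast hinner
        have hm4R : (4 : ℝ) ≤ (B.ncard : ℝ) := by exact_mod_cast h4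
        rw [hout, Nat.cast_zero, hDcR, hinnerR]
        exact arith_poly3 hkR hm4R rfl

end Main

/-- **Lemma (Gallai).** Let `k ≥ 4` and let `T` be an `n`-vertex GDP-tree (every block of `T`
is a complete graph or a cycle) with maximum degree at most `k - 1` and with no `K_k`
subgraph. Then `2|E(T)| ≤ (k - 2 + 2/(k-1)) n`. -/
theorem statement14 {V : Type} [Fintype V] (k : ℕ) (hk : 4 ≤ k) (T : SimpleGraph V)
    (hGDP : ∀ B : Set V, SGIsBlock T B →
      (∀ u ∈ B, ∀ v ∈ B, u ≠ v → T.Adj u v) ∨ IsCycleGraph (T.induce B))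
    (hΔ : ∀ v : V, {u | T.Adj v u}.ncard ≤ k - 1)
    (hfree : T.CliqueFree k) :
    (2 * T.edgeFinset.card : ℝ) ≤
      ((k : ℝ) - 2 + 2 / ((k : ℝ) - 1)) * (Fintype.card V : ℝ) := by
  have hT : rg T Set.univ = T := by
    ext u v
    constructor
    · rintro ⟨h, -, -⟩; exact h
    · intro h; exact ⟨h, trivial, trivial⟩
  have hmain := main_bound (T := T) hk hGDP hΔ hfree ((Set.univ : Set V).ncard)
    (Set.univ : Set V) le_rfl
  rw [hT] at hmain
  have hcard : ((Set.univ : Set V).ncard : ℝ) = (Fintype.card V : ℝ) := by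
    rw [Set.ncard_univ, Nat.card_eq_fintype_card]
  rw [hcard] at hmain
  exact hmain
end

section
/- For all n ≥ 2 and k ≥ 1, the multigraph K_n^k is DP-(k(n−1)+1)-critical: χ_DP(K_n^k) = k(n−1)+1, and every proper sub-multigraph of K_n^k has DP-chromatic number less than k(n−1)+1. -/
open scoped Classical

/- ## Auxiliary lemmas -/

private theorem greedy_step {V C : Type} [Fintype V] [DecidableEq V] (G : Multigraph V)
    (cov : Multigraph.Cover G C)
    (h : ∀ T : Finset V, T.Nonempty → ∃ a ∈ T, ∑ v ∈ T.erase a, G.e v a < (cov.L a).card)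
    (S : Finset V) :
    S.Nonempty → ∃ f : V → C, (∀ v ∈ S, f v ∈ cov.L v) ∧
      ∀ u ∈ S, ∀ v ∈ S, ¬ cov.HAdj (f u) (f v) := by
  induction S using Finset.strongInductionOn with
  | _ S ih =>
  intro hS
  obtain ⟨a, haS, hbound⟩ := h S hS
  by_cases hSe : (S.erase a).Nonempty
  · obtain ⟨f, hf1, hf2⟩ := ih (S.erase a) (Finset.erase_ssubset haS) hSe
    set F := (cov.L a).filter (fun y => ∃ v ∈ S.erase a, cov.HAdj (f v) y) with hF
    have hFsub : F ⊆ (S.erase a).biUnion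
        (fun v => (cov.L a).filter (fun y => cov.HAdj (f v) y)) := by
      intro y hy
      simp only [hF, Finset.mem_filter] at hy
      obtain ⟨hyL, v, hv, hadj⟩ := hy
      exact Finset.mem_biUnion.mpr ⟨v, hv, Finset.mem_filter.mpr ⟨hyL, hadj⟩⟩
    have hFcard : F.card < (cov.L a).card := by
      calc F.card ≤ ∑ v ∈ S.erase a, ((cov.L a).filter (fun y => cov.HAdj (f v) y)).card :=
            le_trans (Finset.card_le_card hFsub) Finset.card_biUnion_le
        _ ≤ ∑ v ∈ S.erase a, G.e v a := by
            apply Finset.sum_le_sum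
            intro v hv
            exact cov.matching v a (Finset.ne_of_mem_erase hv) (f v) (hf1 v hv)
        _ < (cov.L a).card := hbound
    have hns : ¬ (cov.L a ⊆ F) :=
      fun hsub => absurd (Finset.card_le_card hsub) (not_le.mpr hFcard)
    obtain ⟨y, hyL, hyF⟩ := Finset.not_subset.mp hns
    have hyok : ∀ v ∈ S.erase a, ¬ cov.HAdj (f v) y := by
      intro v hv hadj
      exact hyF (Finset.mem_filter.mpr ⟨hyL, ⟨v, hv, hadj⟩⟩)
    refine ⟨Function.update f a y, ?_, ?_⟩
    · intro v hv
      by_cases hva : v = a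
      · subst hva; simpa using hyL
      · rw [Function.update_of_ne hva]
        exact hf1 v (Finset.mem_erase.mpr ⟨hva, hv⟩)
    · intro u hu v hv
      by_cases hua : u = a <;> by_cases hva : v = a
      · subst hua; subst hva
        simp only [Function.update_self]; exact cov.Hirrefl y
      · subst hua
        rw [Function.update_self, Function.update_of_ne hva]
        intro hadj
        exact hyok v (Finset.mem_erase.mpr ⟨hva, hv⟩) (cov.Hsymm _ _ hadj)
      · subst hva
        rw [Function.update_self, Function.update_of_ne hua]
        exact hyok u (Finset.mem_erase.mpr ⟨hua, hu⟩)
      · rw [Function.update_of_ne hua, Function.update_of_ne hva]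
        exact hf2 u (Finset.mem_erase.mpr ⟨hua, hu⟩) v (Finset.mem_erase.mpr ⟨hva, hv⟩)
  · -- here S = {a}
    have hLa : (cov.L a).Nonempty := by
      rw [Finset.not_nonempty_iff_eq_empty] at hSe
      rw [hSe, Finset.sum_empty] at hbound
      exact Finset.card_pos.mp hbound
    obtain ⟨y, hy⟩ := hLa
    have hSa : ∀ v ∈ S, v = a := by
      intro v hv
      by_contra hva
      have : v ∈ S.erase a := Finset.mem_erase.mpr ⟨hva, hv⟩
      rw [Finset.not_nonempty_iff_eq_empty.mp hSe] at this
      exact absurd this (Finset.notMem_empty v)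
    refine ⟨fun _ => y, fun v hv => by rw [hSa v hv]; exact hy,
      fun u _ v _ => cov.Hirrefl y⟩

private theorem greedy {V C : Type} [Fintype V] [DecidableEq V] (G : Multigraph V)
    (cov : Multigraph.Cover G C)
    (h : ∀ T : Finset V, T.Nonempty → ∃ a ∈ T, ∑ v ∈ T.erase a, G.e v a < (cov.L a).card) :
    cov.Colorable := by
  by_cases hV : (Finset.univ : Finset V).Nonempty
  · obtain ⟨f, hf1, hf2⟩ := greedy_step G cov h Finset.univ hV
    refine ⟨Finset.univ.image f, ?_, ?_, ?_⟩
    · intro x hx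
      obtain ⟨v, _, rfl⟩ := Finset.mem_image.mp hx
      exact ⟨v, hf1 v (Finset.mem_univ v)⟩
    · intro x hx y hy
      obtain ⟨u, _, rfl⟩ := Finset.mem_image.mp hx
      obtain ⟨v, _, rfl⟩ := Finset.mem_image.mp hy
      exact hf2 u (Finset.mem_univ u) v (Finset.mem_univ v)
    · intro v
      have heq : Finset.univ.image f ∩ cov.L v = {f v} := by
        apply Finset.Subset.antisymm
        · intro x hx
          rw [Finset.mem_inter] at hx
          obtain ⟨u, _, rfl⟩ := Finset.mem_image.mp hx.1
          have huv : u = v := by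
            by_contra huv
            exact (Finset.disjoint_left.mp (cov.disjoint u v huv)
              (hf1 u (Finset.mem_univ u))) hx.2
          rw [huv]; exact Finset.mem_singleton_self _
        · intro x hx
          rw [Finset.mem_singleton] at hx
          subst hx
          exact Finset.mem_inter.mpr ⟨Finset.mem_image_of_mem f (Finset.mem_univ v),
            hf1 v (Finset.mem_univ v)⟩
      rw [heq, Finset.card_singleton]
  · exact ⟨∅, by simp, by simp, fun v => absurd ⟨v, Finset.mem_univ v⟩ hV⟩

private theorem KMG_e_le (n k : ℕ) (u v : Fin n) : (KMG n k).e u v ≤ k := by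
  show (if u = v then 0 else k) ≤ k
  split <;> omega

private theorem KMG_mem (m k : ℕ) :
    ∀ (C : Type) (cov : Multigraph.Cover (KMG (m+2) k) C),
      (∀ v, k * (m+1) + 1 ≤ (cov.L v).card) → cov.Colorable := by
  intro C cov hcard
  apply greedy
  intro T hT
  obtain ⟨a, ha⟩ := hT
  refine ⟨a, ha, ?_⟩
  have h1 : ∑ v ∈ T.erase a, (KMG (m+2) k).e v a ≤ (T.erase a).card * k := by
    have := Finset.sum_le_card_nsmul (T.erase a) (fun v => (KMG (m+2) k).e v a) k
      (fun v _ => KMG_e_le _ _ _ _)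
    simpa [smul_eq_mul] using this
  have h2 : (T.erase a).card ≤ m + 1 := by
    have hsub := Finset.card_le_card (Finset.erase_subset_erase a (Finset.subset_univ T))
    rw [Finset.card_erase_of_mem (Finset.mem_univ a), Finset.card_univ,
      Fintype.card_fin] at hsub
    omega
  have h3 : (T.erase a).card * k ≤ (m+1) * k := Nat.mul_le_mul_right k h2
  have h4 : k * (m+1) = (m+1) * k := Nat.mul_comm _ _
  have h5 := hcard a
  omega

/-- The bad cover of `K_{m+2}^k` with lists of size `k(m+1)` forbidding equal blocks. -/
noncomputable def badCover (m k : ℕ) (hk : 1 ≤ k) :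
    Multigraph.Cover (KMG (m+2) k) (Fin (m+2) × Fin (k*(m+1))) where
  L v := Finset.univ.image (Prod.mk v)
  HAdj p q := p ≠ q ∧ (p.1 = q.1 ∨ p.2.val / k = q.2.val / k)
  Hsymm := fun x y h => ⟨h.1.symm, h.2.imp Eq.symm Eq.symm⟩
  Hirrefl := fun x h => h.1 rfl
  disjoint := by
    intro u v huv
    rw [Finset.disjoint_left]
    rintro p hp hq
    simp only [Finset.mem_image] at hp hq
    obtain ⟨i, _, rfl⟩ := hp
    obtain ⟨j, _, hj⟩ := hq
    exact huv (congrArg Prod.fst hj).symm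
  cliques := by
    intro v x hx y hy hxy
    simp only [Finset.mem_image] at hx hy
    obtain ⟨i, _, rfl⟩ := hx
    obtain ⟨j, _, rfl⟩ := hy
    exact ⟨hxy, Or.inl rfl⟩
  edges_within := by
    intro x y hxy
    refine ⟨x.1, y.1, Finset.mem_image.mpr ⟨x.2, Finset.mem_univ _, rfl⟩,
      Finset.mem_image.mpr ⟨y.2, Finset.mem_univ _, rfl⟩, ?_⟩
    by_cases h : x.1 = y.1
    · exact Or.inl h
    · refine Or.inr ⟨h, ?_⟩
      show 1 ≤ (if x.1 = y.1 then 0 else k)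
      simp [h, hk]
  matching := by
    intro u v huv x hx
    have hk' : 0 < k := hk
    have he : (KMG (m+2) k).e u v = k := by
      show (if u = v then 0 else k) = k
      simp [huv]
    rw [he]
    have hx1 : x.1 = u := by
      simp only [Finset.mem_image] at hx
      obtain ⟨i, _, rfl⟩ := hx; rfl
    refine le_trans (Finset.card_le_card_of_injOn
      (fun q : Fin (m+2) × Fin (k*(m+1)) => q.2.val % k)
      (fun q _ => Finset.mem_range.mpr (Nat.mod_lt _ hk')) ?_)
      (le_of_eq (Finset.card_range k))
    intro q hq q' hq' hmod
    simp only [Finset.coe_filter, Set.mem_setOf_eq, Finset.mem_coe,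
      Finset.mem_image] at hq hq'
    obtain ⟨⟨i, _, rfl⟩, _, hor⟩ := hq
    obtain ⟨⟨j, _, rfl⟩, _, hor'⟩ := hq'
    have hdiv : x.2.val / k = i.val / k := by
      rcases hor with h | h
      · exact absurd (hx1 ▸ h : u = v) huv
      · exact h
    have hdiv' : x.2.val / k = j.val / k := by
      rcases hor' with h | h
      · exact absurd (hx1 ▸ h : u = v) huv
      · exact h
    have hij : i.val = j.val := by
      calc i.val = k * (i.val / k) + i.val % k := (Nat.div_add_mod _ _).symm
        _ = k * (j.val / k) + j.val % k := by
            rw [← hdiv, hdiv']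
            simpa using hmod
        _ = j.val := Nat.div_add_mod _ _
    rw [Fin.ext hij]

private theorem badCover_card (m k : ℕ) (hk : 1 ≤ k) (v : Fin (m+2)) :
    ((badCover m k hk).L v).card = k * (m+1) := by
  show (Finset.univ.image (Prod.mk v)).card = _
  rw [Finset.card_image_of_injective _ (fun a b h => by simpa using congrArg Prod.snd h)]
  simp

private theorem badCover_not_colorable (m k : ℕ) (hk : 1 ≤ k) :
    ¬ (badCover m k hk).Colorable := by
  rintro ⟨I, h1, h2, h3⟩
  have hg : ∀ v : Fin (m+2), ∃ p, p ∈ I ∧ p ∈ (badCover m k hk).L v := by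
    intro v
    obtain ⟨p, hp⟩ := Finset.card_eq_one.mp (h3 v)
    have hpm := Finset.mem_of_subset hp.ge (Finset.mem_singleton_self p)
    exact ⟨p, (@Finset.mem_inter _ (fun a b => Classical.propDecidable (a = b)) _ _ _).mp hpm⟩
  choose g hg using hg
  have hgI : ∀ v, g v ∈ I := fun v => (hg v).1
  have hgL : ∀ v, (g v).1 = v := by
    intro v
    have hm := (hg v).2
    have hm' : g v ∈ Finset.univ.image (Prod.mk v) := hm
    simp only [Finset.mem_image] at hm'
    obtain ⟨i, _, h⟩ := hm'
    exact (congrArg Prod.fst h).symm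
  have hdivlt : ∀ v, (g v).2.val / k < m + 1 := by
    intro v
    exact Nat.div_lt_of_lt_mul (g v).2.isLt
  have hbinj : Function.Injective (fun v : Fin (m+2) => (⟨(g v).2.val / k, hdivlt v⟩ : Fin (m+1))) := by
    intro u v huv
    by_contra hne
    have hdiv : (g u).2.val / k = (g v).2.val / k := congrArg Fin.val huv
    have hguv : g u ≠ g v := by
      intro h
      exact hne (by rw [← hgL u, ← hgL v, h])
    exact h2 _ (hgI u) _ (hgI v) ⟨hguv, Or.inr hdiv⟩
  have hcard := Fintype.card_le_of_injective _ hbinj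
  simp only [Fintype.card_fin] at hcard
  omega

open Multigraph in
/-- For `n ≥ 2` and `k ≥ 1`, the multigraph `K_n^k` is DP-`(k(n-1)+1)`-critical:
`χ_DP(K_n^k) = k(n-1)+1` and every proper sub-multigraph has smaller DP-chromatic number. -/
theorem statement18 (n k : ℕ) (hn : 2 ≤ n) (hk : 1 ≤ k) :
    DPCritical (KMG n k) (k * (n - 1) + 1) := by
  obtain ⟨m, rfl⟩ : ∃ m, n = m + 2 := ⟨n - 2, by omega⟩
  have hsub : m + 2 - 1 = m + 1 := rfl
  rw [hsub]
  constructor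
  · -- the DP-chromatic number is k(m+1)+1
    unfold Multigraph.DPChromatic
    apply le_antisymm
    · exact Nat.sInf_le (KMG_mem m k)
    · apply le_csInf
      · exact ⟨k * (m+1) + 1, KMG_mem m k⟩
      intro j hj
      by_contra hlt
      push_neg at hlt
      have hcol := hj _ (badCover m k hk)
        (fun v => by rw [badCover_card m k hk v]; omega)
      exact badCover_not_colorable m k hk hcol
  · -- criticality
    intro A e' hsymm' hle hsupp hne
    have hmem : ∀ (C : Type)
        (cov : Multigraph.Cover (Multigraph.subMG (KMG (m+2) k) A e' hsymm' hle) C),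
        (∀ v, k * (m+1) ≤ (cov.L v).card) → cov.Colorable := by
      intro C cov hcard
      apply greedy
      have hEbound : ∀ (u v : {x // x ∈ A}),
          (Multigraph.subMG (KMG (m+2) k) A e' hsymm' hle).e u v ≤ k :=
        fun u v => le_trans (hle _ _) (KMG_e_le _ _ _ _)
      have key : ∀ (a : {x // x ∈ A}) (s : Finset {x // x ∈ A}), s.card ≤ m →
          ∑ v ∈ s, (Multigraph.subMG (KMG (m+2) k) A e' hsymm' hle).e v a
            < (cov.L a).card := by
        intro a s hs
        have h1 : ∑ v ∈ s, (Multigraph.subMG (KMG (m+2) k) A e' hsymm' hle).e v a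
            ≤ s.card * k := by
          have := Finset.sum_le_card_nsmul s
            (fun v => (Multigraph.subMG (KMG (m+2) k) A e' hsymm' hle).e v a) k
            (fun v _ => hEbound v a)
          simpa [smul_eq_mul] using this
        have h2 := hcard a
        have h3 : s.card * k ≤ m * k := Nat.mul_le_mul_right k hs
        have h4 : k * (m+1) = m * k + k := by ring
        omega
      have hcardUniv : (Finset.univ : Finset {x // x ∈ A}).card = A.card := by
        rw [Finset.card_univ, Fintype.card_coe]
      intro T hT
      by_cases hA : A = Finset.univ
      · -- all vertices present, some multiplicity decreased
        have he' : e' ≠ (KMG (m+2) k).e := by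
          intro h
          exact hne ⟨hA, h⟩
        rw [Function.ne_iff] at he'
        obtain ⟨u0, hu0⟩ := he'
        rw [Function.ne_iff] at hu0
        obtain ⟨v0, hv0⟩ := hu0
        have huv0 : u0 ≠ v0 := by
          rintro rfl
          have h0 : (KMG (m+2) k).e u0 u0 = 0 := (KMG (m+2) k).loopless u0
          have := hle u0 u0
          omega
        have he'lt : e' u0 v0 < k := by
          have hle' := hle u0 v0
          have h2 : (KMG (m+2) k).e u0 v0 = k := by
            show (if u0 = v0 then 0 else k) = k
            simp [huv0]
          omega
        have hu0A : u0 ∈ A := by rw [hA]; exact Finset.mem_univ _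
        have hv0A : v0 ∈ A := by rw [hA]; exact Finset.mem_univ _
        have hAc : A.card = m + 2 := by rw [hA, Finset.card_univ, Fintype.card_fin]
        set u0' : {x // x ∈ A} := ⟨u0, hu0A⟩ with hu0'
        set v0' : {x // x ∈ A} := ⟨v0, hv0A⟩ with hv0'
        have hne' : u0' ≠ v0' := fun h => huv0 (congrArg Subtype.val h)
        by_cases hboth : u0' ∈ T ∧ v0' ∈ T
        · refine ⟨v0', hboth.2, ?_⟩
          have hu0'T : u0' ∈ T.erase v0' := Finset.mem_erase.mpr ⟨hne', hboth.1⟩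
          rw [← Finset.add_sum_erase _ _ hu0'T]
          have hrestcard : ((T.erase v0').erase u0').card ≤ m := by
            have hsub2 : (T.erase v0').erase u0' ⊆
                ((Finset.univ : Finset {x // x ∈ A}).erase v0').erase u0' :=
              Finset.erase_subset_erase _ (Finset.erase_subset_erase _ (Finset.subset_univ T))
            have hc := Finset.card_le_card hsub2
            rw [Finset.card_erase_of_mem (Finset.mem_erase.mpr ⟨hne', Finset.mem_univ _⟩),
              Finset.card_erase_of_mem (Finset.mem_univ _), hcardUniv] at hc
            omega
          have hrest : ∑ v ∈ (T.erase v0').erase u0',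
              (Multigraph.subMG (KMG (m+2) k) A e' hsymm' hle).e v v0' ≤ m * k := by
            have := Finset.sum_le_card_nsmul ((T.erase v0').erase u0')
              (fun v => (Multigraph.subMG (KMG (m+2) k) A e' hsymm' hle).e v v0') k
              (fun v _ => hEbound v v0')
            have h3 : ((T.erase v0').erase u0').card * k ≤ m * k :=
              Nat.mul_le_mul_right k hrestcard
            simp only [smul_eq_mul] at this
            omega
          have hfirst : (Multigraph.subMG (KMG (m+2) k) A e' hsymm' hle).e u0' v0'
              = e' u0 v0 := rfl
          have h2 := hcard v0'
          have h4 : k * (m+1) = m * k + k := by ring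
          rw [hfirst]
          omega
        · obtain ⟨a, haT⟩ := hT
          refine ⟨a, haT, ?_⟩
          apply key
          have hTcard : T.card ≤ m + 1 := by
            rcases not_and_or.mp hboth with hw | hw
            · have hsub2 : T ⊆ Finset.univ.erase u0' :=
                fun x hx => Finset.mem_erase.mpr ⟨fun h => hw (h ▸ hx), Finset.mem_univ _⟩
              have hc := Finset.card_le_card hsub2
              rw [Finset.card_erase_of_mem (Finset.mem_univ _), hcardUniv] at hc
              omega
            · have hsub2 : T ⊆ Finset.univ.erase v0' :=
                fun x hx => Finset.mem_erase.mpr ⟨fun h => hw (h ▸ hx), Finset.mem_univ _⟩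
              have hc := Finset.card_le_card hsub2
              rw [Finset.card_erase_of_mem (Finset.mem_univ _), hcardUniv] at hc
              omega
          rw [Finset.card_erase_of_mem haT]
          omega
      · -- a vertex was removed
        obtain ⟨a, haT⟩ := hT
        refine ⟨a, haT, ?_⟩
        apply key
        have hAcard : A.card ≤ m + 1 := by
          have hss : A ⊂ Finset.univ := Finset.ssubset_univ_iff.mpr hA
          have := Finset.card_lt_card hss
          rw [Finset.card_univ, Fintype.card_fin] at this
          omega
        have hTc : T.card ≤ A.card := by
          have := Finset.card_le_card (Finset.subset_univ T)
          rw [hcardUniv] at this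
          exact this
        rw [Finset.card_erase_of_mem haT]
        omega
    have hle' : Multigraph.DPChromatic
        (Multigraph.subMG (KMG (m+2) k) A e' hsymm' hle) ≤ k * (m+1) := by
      unfold Multigraph.DPChromatic
      exact Nat.sInf_le hmem
    omega
end
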